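/- arXiv:2506.22306 — 6 statements merged into one kernel-verified Lean document; each statement's English description precedes it below -/
import Mathlib

section
/- Rotation preserves noncrossing matchings: if M is a noncrossing matching on {1,...,n} (no two arcs (i,j),(i',j') with i<i'<j<j') and ρ is the map sending each arc (a,b) to (ρ(a),ρ(b)) where ρ(i) = i-1 mod n, then ρ(M) is also a noncrossing matching. -/
/-- `ρ` on `{1,…,n}` : `i ↦ i-1 mod n`, with representatives in `{1,…,n}`. -/
def rotIdx (n i : ℕ) : ℕ := if i = 1 then n else i - 1

/-- Rotation of an arc, reordered so the smaller endpoint comes first. -/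
def rotArc (n : ℕ) (p : ℕ × ℕ) : ℕ × ℕ :=
  (min (rotIdx n p.1) (rotIdx n p.2), max (rotIdx n p.1) (rotIdx n p.2))

/-- `M` is a matching on `{1,…,n}` : every arc `(i,j)` satisfies `1 ≤ i ≤ j ≤ n`
and every element of `{1,…,n}` occurs in at most one arc. -/
def IsMatchingOn (n : ℕ) (M : Finset (ℕ × ℕ)) : Prop :=
  (∀ p ∈ M, 1 ≤ p.1 ∧ p.1 ≤ p.2 ∧ p.2 ≤ n) ∧
  ∀ x, 1 ≤ x → x ≤ n → (M.filter (fun p => p.1 = x ∨ p.2 = x)).card ≤ 1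

/-- A matching is crossing if it contains arcs `(i,j)`, `(i',j')` with `i < i' < j < j'`. -/
def IsCrossing (M : Finset (ℕ × ℕ)) : Prop :=
  ∃ p ∈ M, ∃ q ∈ M, p.1 < q.1 ∧ q.1 < p.2 ∧ p.2 < q.2

/-- Inverse of `rotIdx` on `{1,…,n}`. -/
def invRot (n x : ℕ) : ℕ := if x = n then 1 else x + 1

/-- Rotation preserves noncrossing matchings. -/
theorem rotation_preserves_noncrossing (n : ℕ) (hn : 0 < n) (M : Finset (ℕ × ℕ))
    (hM : IsMatchingOn n M) (hnc : ¬ IsCrossing M) :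
    IsMatchingOn n (M.image (rotArc n)) ∧ ¬ IsCrossing (M.image (rotArc n)) := by
  constructor
  · constructor
    · intro p' hp'
      obtain ⟨p, hp, rfl⟩ := Finset.mem_image.mp hp'
      obtain ⟨h1, h2, h3⟩ := hM.1 p hp
      simp only [rotArc, rotIdx]
      refine ⟨?_, ?_, ?_⟩ <;> split_ifs <;> omega
    · intro x hx1 hxn
      have key : (M.image (rotArc n)).filter (fun p => p.1 = x ∨ p.2 = x) ⊆
          (M.filter (fun p => p.1 = invRot n x ∨ p.2 = invRot n x)).image (rotArc n) := by
        intro q hq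
        simp only [Finset.mem_filter, Finset.mem_image] at hq ⊢
        obtain ⟨⟨p, hp, rfl⟩, hcond⟩ := hq
        refine ⟨p, ⟨hp, ?_⟩, rfl⟩
        obtain ⟨h1, h2, h3⟩ := hM.1 p hp
        simp only [rotArc, rotIdx, invRot] at hcond ⊢
        split_ifs at hcond ⊢ <;> omega
      have hx' : 1 ≤ invRot n x ∧ invRot n x ≤ n := by unfold invRot; split_ifs <;> omega
      exact le_trans (Finset.card_le_card key)
        (le_trans Finset.card_image_le (hM.2 _ hx'.1 hx'.2))
  · intro hc
    obtain ⟨p', hp', q', hq', h1, h2, h3⟩ := hc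
    obtain ⟨p, hp, rfl⟩ := Finset.mem_image.mp hp'
    obtain ⟨q, hq, rfl⟩ := Finset.mem_image.mp hq'
    obtain ⟨ha1, ha2, ha3⟩ := hM.1 p hp
    obtain ⟨hb1, hb2, hb3⟩ := hM.1 q hq
    have key : (p.1 < q.1 ∧ q.1 < p.2 ∧ p.2 < q.2) ∨
        (q.1 < p.1 ∧ p.1 < q.2 ∧ q.2 < p.2) ∨ (p.1 = 1 ∧ q.1 = 1) := by
      simp only [rotArc, rotIdx] at h1 h2 h3
      split_ifs at h1 h2 h3 <;> omega
    rcases key with h | h | ⟨e1, e2⟩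
    · exact hnc ⟨p, hp, q, hq, h.1, h.2.1, h.2.2⟩
    · exact hnc ⟨q, hq, p, hp, h.1, h.2.1, h.2.2⟩
    · have hpq : p = q :=
        Finset.card_le_one.mp (hM.2 1 le_rfl hn) p
          (Finset.mem_filter.mpr ⟨hp, Or.inl e1⟩) q
          (Finset.mem_filter.mpr ⟨hq, Or.inl e2⟩)
      rw [hpq] at h1
      exact lt_irrefl _ h1
end

section
/- The matching M_i constructed between rows i and i+1 of a standard Young tableau by the recursive algorithm (matching each entry of row i+1, in increasing order, to the largest unmatched entry of row i not exceeding it) is noncrossing: it contains no two arcs (a,b), (a',b') with a < a' < b < b'. -/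
/-- The matching between two consecutive rows of a standard Young tableau produced by
the greedy algorithm (each entry of row `i+1`, in increasing order, matched to the
largest unmatched entry of row `i` not exceeding it) is noncrossing: there are no two
arcs `(a (f ℓ), b ℓ)`, `(a (f ℓ'), b ℓ')` with `a (f ℓ) < a (f ℓ') < b ℓ < b ℓ'`. -/
theorem syt_row_matching_noncrossing (p q : ℕ) (hqp : q ≤ p)
    (a : Fin p → ℕ) (b : Fin q → ℕ)
    (ha : StrictMono a) (hb : StrictMono b)
    (hcol : ∀ ℓ : Fin q, a (Fin.castLE hqp ℓ) < b ℓ)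
    (f : Fin q → Fin p) (hinj : Function.Injective f)
    (hle : ∀ ℓ, a (f ℓ) ≤ b ℓ)
    (hgreedy : ∀ ℓ j, a j ≤ b ℓ → (∀ ℓ', ℓ' < ℓ → f ℓ' ≠ j) → j ≤ f ℓ) :
    ∀ ℓ ℓ' : Fin q, ¬ (a (f ℓ) < a (f ℓ') ∧ a (f ℓ') < b ℓ ∧ b ℓ < b ℓ') := by
  rintro ℓ ℓ' ⟨h1, h2, h3⟩
  have hff : f ℓ < f ℓ' := ha.lt_iff_lt.mp h1
  have hll : ℓ < ℓ' := hb.lt_iff_lt.mp h3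
  have : f ℓ' ≤ f ℓ := by
    apply hgreedy ℓ (f ℓ') h2.le
    intro ℓ'' h'' heq
    exact absurd (hinj heq) (by omega)
  omega
end

section
/- The matching M_i constructed between rows i and i+1 of a standard Young tableau by the recursive algorithm is standard: every integer strictly between the two endpoints of any arc of M_i that is itself an entry of row i or row i+1 is the endpoint of some arc of M_i. -/
/-- The matching between two consecutive rows of a standard Young tableau produced by
the greedy algorithm is standard: every integer strictly between the endpoints of an
arc which is itself an entry of row `i` or row `i+1` is the endpoint of some arc. -/
theorem syt_row_matching_standard (p q : ℕ) (hqp : q ≤ p)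
    (a : Fin p → ℕ) (b : Fin q → ℕ)
    (ha : StrictMono a) (hb : StrictMono b)
    (hcol : ∀ ℓ : Fin q, a (Fin.castLE hqp ℓ) < b ℓ)
    (f : Fin q → Fin p) (hinj : Function.Injective f)
    (hle : ∀ ℓ, a (f ℓ) ≤ b ℓ)
    (hgreedy : ∀ ℓ j, a j ≤ b ℓ → (∀ ℓ', ℓ' < ℓ → f ℓ' ≠ j) → j ≤ f ℓ) :
    ∀ (ℓ : Fin q) (x : ℕ), a (f ℓ) < x → x < b ℓ →
      ((∃ j : Fin p, a j = x) ∨ (∃ ℓ' : Fin q, b ℓ' = x)) →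
      ∃ ℓ'' : Fin q, a (f ℓ'') = x ∨ b ℓ'' = x := by
  intro ℓ x hax hxb hmem
  rcases hmem with ⟨j, hj⟩ | ⟨ℓ', hℓ'⟩
  · -- x is an entry of row i; show j is in the range of f
    by_contra hcon
    push_neg at hcon
    have hnot : ∀ ℓ', f ℓ' ≠ j := by
      intro ℓ' hfe
      exact (hcon ℓ').1 (by rw [hfe, hj])
    have hjle : j ≤ f ℓ := hgreedy ℓ j (hj ▸ le_of_lt hxb) (fun ℓ' _ => hnot ℓ')
    have : f ℓ < j := ha.lt_iff_lt.mp (by rw [hj]; exact hax)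
    exact absurd hjle (not_le.mpr this)
  · exact ⟨ℓ', Or.inr hℓ'⟩
end

section
/- Let T be a rectangular standard Young tableau with n rows and let S be a uniformly proper rectangular subtableau of T (so T = T_1 S T_2 as a horizontal concatenation). If the m-diagram φ(T) contains an arc (a,b) such that a is an entry of S or b is an entry of S, then both a and b are entries of S. -/
/-- `T` (as a function `ℕ → ℕ → ℕ`, row-column indexed from `0`) is a rectangular
standard Young tableau with `r` rows, `c` columns and content `{1,…,r*c}` :
rows strictly increase left-to-right, columns strictly increase top-to-bottom. -/
def IsRectSYT (r c : ℕ) (T : ℕ → ℕ → ℕ) : Prop :=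
  (∀ i j, i < r → j + 1 < c → T i j < T i (j + 1)) ∧
  (∀ i j, i + 1 < r → j < c → T i j < T (i + 1) j) ∧
  (∀ i j, i < r → j < c → 1 ≤ T i j ∧ T i j ≤ r * c) ∧
  (∀ v, 1 ≤ v → v ≤ r * c → ∃ i j, i < r ∧ j < c ∧ T i j = v)

/-- One step of the jeu de taquin slide of the empty box at position `p` in an
`r × c` rectangular tableau: slide the right neighbour `b` left if `b < a` (entries
being distinct, `≤` and `<` agree), else slide the lower neighbour `a` up. -/
def slideNext (r c : ℕ) (T : ℕ → ℕ → ℕ) (p : ℕ × ℕ) : ℕ × ℕ :=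
  if p.1 + 1 < r ∧ p.2 + 1 < c then
    (if T p.1 (p.2 + 1) ≤ T (p.1 + 1) p.2 then (p.1, p.2 + 1) else (p.1 + 1, p.2))
  else if p.2 + 1 < c then (p.1, p.2 + 1)
  else if p.1 + 1 < r then (p.1 + 1, p.2)
  else p

/-- The sliding path of the empty box during promotion, starting in the top-left
corner; the path stabilizes once the empty box has nothing below or to its right. -/
def slidePath (r c : ℕ) (T : ℕ → ℕ → ℕ) : ℕ → ℕ × ℕ
  | 0 => (0, 0)
  | k + 1 => slideNext r c T (slidePath r c T k)

open Classical in
/-- Jeu de taquin promotion of a rectangular standard Young tableau: erase the entry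
`1` in the top-left corner, slide along the sliding path, decrement all entries by `1`
and put `r*c` in the final empty box. -/
noncomputable def promote (r c : ℕ) (T : ℕ → ℕ → ℕ) : ℕ → ℕ → ℕ := fun i j =>
  if (i, j) = slidePath r c T (r + c) then r * c
  else if h : ∃ k, slidePath r c T k = (i, j) then
    T (slidePath r c T (Nat.find h + 1)).1 (slidePath r c T (Nat.find h + 1)).2 - 1
  else T i j - 1

/-- The greedy matching between rows `i` and `i+1` of `T` : the list whose `j`-th item
is the column (in row `i`) matched to column `j` of row `i+1`, namely the largest
column `j'` of row `i` with `T i j' ≤ T (i+1) j` that is not already matched. -/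
def partnerList (c : ℕ) (T : ℕ → ℕ → ℕ) (i : ℕ) : ℕ → List ℕ
  | 0 => []
  | j + 1 =>
    let prev := partnerList c T i j
    prev ++ [((List.range c).filter
      (fun j' => decide (T i j' ≤ T (i + 1) j ∧ j' ∉ prev))).foldr max 0]

/-- The column of row `i` matched to column `j` of row `i+1` by the greedy algorithm. -/
def partnerCol (c : ℕ) (T : ℕ → ℕ → ℕ) (i j : ℕ) : ℕ :=
  (partnerList c T i (j + 1)).getD j 0

lemma rowLT {r c : ℕ} {T : ℕ → ℕ → ℕ} (hT : IsRectSYT r c T)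
    {i : ℕ} (hi : i < r) {j : ℕ} : ∀ j', j < j' → j' < c → T i j < T i j' := by
  intro j'
  induction j' with
  | zero => omega
  | succ n ih =>
    intro h hj'
    rcases Nat.lt_or_ge j n with h1 | h1
    · exact lt_trans (ih h1 (by omega)) (hT.1 i n hi hj')
    · have : j = n := by omega
      subst this
      exact hT.1 i j hi hj'

lemma rowLE {r c : ℕ} {T : ℕ → ℕ → ℕ} (hT : IsRectSYT r c T)
    {i : ℕ} (hi : i < r) {j j' : ℕ} (h : j ≤ j') (hj' : j' < c) : T i j ≤ T i j' := by
  rcases Nat.lt_or_ge j j' with h1 | h1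
  · exact le_of_lt (rowLT hT hi j' h1 hj')
  · have : j = j' := by omega
    subst this; rfl

lemma sytInj {r c : ℕ} {T : ℕ → ℕ → ℕ} (hT : IsRectSYT r c T) :
    ∀ i j i' j', i < r → j < c → i' < r → j' < c → T i j = T i' j' → i = i' ∧ j = j' := by
  intro i j i' j' hi hj hi' hj' he
  have key := Finset.inj_on_of_surj_on_of_card_le
    (s := (Finset.range r) ×ˢ (Finset.range c)) (t := Finset.Icc 1 (r * c))
    (fun p _ => T p.1 p.2)
    (fun p hp => by
      simp only [Finset.mem_product, Finset.mem_range] at hp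
      exact Finset.mem_Icc.mpr (hT.2.2.1 p.1 p.2 hp.1 hp.2))
    (fun v hv => by
      obtain ⟨i0, j0, h1, h2, h3⟩ := hT.2.2.2 v (Finset.mem_Icc.mp hv).1 (Finset.mem_Icc.mp hv).2
      exact ⟨(i0, j0), by simp [Finset.mem_product, h1, h2], h3⟩)
    (by simp [Nat.card_Icc])
  have := key (a₁ := (i, j)) (by simp [Finset.mem_product, hi, hj])
    (a₂ := (i', j')) (by simp [Finset.mem_product, hi', hj']) he
  exact ⟨congrArg Prod.fst this, congrArg Prod.snd this⟩

lemma foldr_max_mem : ∀ (l : List ℕ), l ≠ [] → l.foldr max 0 ∈ l := by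
  intro l
  induction l with
  | nil => simp
  | cons a t ih =>
    intro _
    cases t with
    | nil => simp
    | cons b u =>
      show max a ((b :: u).foldr max 0) ∈ a :: b :: u
      rcases le_total a ((b :: u).foldr max 0) with h | h
      · rw [max_eq_right h]
        exact List.mem_cons_of_mem a (ih (by simp))
      · rw [max_eq_left h]
        exact List.mem_cons_self (a := a)

lemma le_foldr_max : ∀ (l : List ℕ) (x : ℕ), x ∈ l → x ≤ l.foldr max 0 := by
  intro l
  induction l with
  | nil => simp
  | cons a t ih =>
    intro x hx
    rcases List.mem_cons.mp hx with rfl | hx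
    · exact le_max_left _ _
    · exact le_trans (ih x hx) (le_max_right _ _)

lemma partnerList_length (c : ℕ) (T : ℕ → ℕ → ℕ) (i : ℕ) :
    ∀ j, (partnerList c T i j).length = j := by
  intro j
  induction j with
  | zero => rfl
  | succ n ih => simp [partnerList, ih]

lemma getD_append_length : ∀ (l : List ℕ) (x d : ℕ), (l ++ [x]).getD l.length d = x := by
  intro l
  induction l with
  | nil => intro x d; rfl
  | cons a t ih => intro x d; simp only [List.cons_append, List.length_cons, List.getD_cons_succ]; exact ih x d

lemma partnerCol_eq (c : ℕ) (T : ℕ → ℕ → ℕ) (i j : ℕ) : partnerCol c T i j =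
    ((List.range c).filter
      (fun j' => decide (T i j' ≤ T (i + 1) j ∧ j' ∉ partnerList c T i j))).foldr max 0 := by
  have h1 : partnerList c T i (j + 1) = partnerList c T i j ++
      [((List.range c).filter
        (fun j' => decide (T i j' ≤ T (i + 1) j ∧ j' ∉ partnerList c T i j))).foldr max 0] := rfl
  rw [partnerCol, h1]
  have := getD_append_length (partnerList c T i j)
    (((List.range c).filter
      (fun j' => decide (T i j' ≤ T (i + 1) j ∧ j' ∉ partnerList c T i j))).foldr max 0) 0
  rw [partnerList_length] at this
  exact this

lemma partnerList_succ (c : ℕ) (T : ℕ → ℕ → ℕ) (i j : ℕ) :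
    partnerList c T i (j + 1) = partnerList c T i j ++ [partnerCol c T i j] := by
  rw [partnerCol_eq]; rfl

lemma mem_partnerList {c : ℕ} {T : ℕ → ℕ → ℕ} {i : ℕ} :
    ∀ {j x : ℕ}, x ∈ partnerList c T i j ↔ ∃ j', j' < j ∧ partnerCol c T i j' = x := by
  intro j
  induction j with
  | zero => simp [partnerList]
  | succ n ih =>
    intro x
    rw [partnerList_succ]
    simp only [List.mem_append, List.mem_singleton, ih]
    constructor
    · rintro (⟨j', h1, h2⟩ | rfl)
      · exact ⟨j', by omega, h2⟩
      · exact ⟨n, by omega, rfl⟩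
    · rintro ⟨j', h1, h2⟩
      rcases Nat.lt_or_ge j' n with h | h
      · exact Or.inl ⟨j', h, h2⟩
      · have : j' = n := by omega
        subst this
        exact Or.inr h2.symm

lemma partnerCol_spec {r c : ℕ} {T : ℕ → ℕ → ℕ} (hT : IsRectSYT r c T)
    {i j : ℕ} (hi : i + 1 < r) (hj : j < c) :
    partnerCol c T i j < c ∧ T i (partnerCol c T i j) ≤ T (i + 1) j ∧
    (∀ j' < j, partnerCol c T i j' ≠ partnerCol c T i j) ∧
    (∀ t, t < c → T i t ≤ T (i + 1) j → (∀ j' < j, partnerCol c T i j' ≠ t) →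
      t ≤ partnerCol c T i j) := by
  set L := (List.range c).filter
      (fun j' => decide (T i j' ≤ T (i + 1) j ∧ j' ∉ partnerList c T i j)) with hL
  have hmemL : ∀ t : ℕ, t ∈ L ↔ t < c ∧ T i t ≤ T (i + 1) j ∧
      (∀ j' < j, partnerCol c T i j' ≠ t) := by
    intro t
    rw [hL, List.mem_filter]
    simp only [List.mem_range, decide_eq_true_eq, mem_partnerList]
    constructor
    · rintro ⟨h1, h2, h3⟩
      exact ⟨h1, h2, fun j' hj' he => h3 ⟨j', hj', he⟩⟩
    · rintro ⟨h1, h2, h3⟩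
      exact ⟨h1, h2, fun ⟨j', hj', he⟩ => h3 j' hj' he⟩
  -- nonemptiness
  have hex : ∃ t, t ≤ j ∧ t ∉ partnerList c T i j := by
    by_contra h
    push_neg at h
    have hsub : Finset.range (j + 1) ⊆ (partnerList c T i j).toFinset := by
      intro t ht
      rw [List.mem_toFinset]
      exact h t (by simpa using Nat.lt_succ_iff.mp (Finset.mem_range.mp ht))
    have h1 := Finset.card_le_card hsub
    have h2 := (partnerList c T i j).toFinset_card_le
    rw [Finset.card_range] at h1
    rw [partnerList_length] at h2
    omega
  obtain ⟨t, ht1, ht2⟩ := hex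
  have htL : t ∈ L := by
    rw [hL, List.mem_filter]
    simp only [List.mem_range, decide_eq_true_eq]
    refine ⟨by omega, ⟨?_, ht2⟩⟩
    exact le_trans (rowLE hT (by omega) ht1 hj) (le_of_lt (hT.2.1 i j hi hj))
  have hne : L ≠ [] := List.ne_nil_of_mem htL
  have hmem : partnerCol c T i j ∈ L := by
    rw [partnerCol_eq]; exact foldr_max_mem L hne
  obtain ⟨h1, h2, h3⟩ := (hmemL _).mp hmem
  refine ⟨h1, h2, h3, ?_⟩
  intro t' ht'c ht'le ht'new
  rw [partnerCol_eq]
  exact le_foldr_max L t' ((hmemL t').mpr ⟨ht'c, ht'le, ht'new⟩)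

lemma valS {r w k : ℕ} {T : ℕ → ℕ → ℕ} {s : ℕ → ℕ}
    (hcontent : ∀ v, (k < v ∧ v ≤ k + r * w) ↔ ∃ i j, i < r ∧ j < w ∧ T i (s i + j) = v) :
    ∀ i j₀, i < r → j₀ < w → k < T i (s i + j₀) ∧ T i (s i + j₀) ≤ k + r * w :=
  fun i j₀ hi hj => (hcontent _).mpr ⟨i, j₀, hi, hj, rfl⟩

lemma colS {r c w k : ℕ} {T : ℕ → ℕ → ℕ} {s : ℕ → ℕ} (hT : IsRectSYT r c T)
    (hfit : ∀ i, i < r → s i + w ≤ c)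
    (hcontent : ∀ v, (k < v ∧ v ≤ k + r * w) ↔ ∃ i j, i < r ∧ j < w ∧ T i (s i + j) = v) :
    ∀ i j, i < r → j < c → k < T i j → T i j ≤ k + r * w → s i ≤ j ∧ j < s i + w := by
  intro i j hi hj h1 h2
  obtain ⟨i', j₀, hi', hj₀, hv⟩ := (hcontent (T i j)).mp ⟨h1, h2⟩
  have hcell : s i' + j₀ < c := lt_of_lt_of_le (by omega) (hfit i' hi')
  obtain ⟨e1, e2⟩ := sytInj hT i' (s i' + j₀) i j hi' hcell hi hj hv
  subst e1
  omega

lemma classify {r c w k : ℕ} {T : ℕ → ℕ → ℕ} {s : ℕ → ℕ}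
    (hT : IsRectSYT r c T) (hw : 0 < w)
    (hfit : ∀ i, i < r → s i + w ≤ c)
    (hcontent : ∀ v, (k < v ∧ v ≤ k + r * w) ↔ ∃ i j, i < r ∧ j < w ∧ T i (s i + j) = v)
    (hcol : ∀ i j, i + 1 < r → j < w → T i (s i + j) < T (i + 1) (s (i + 1) + j))
    {i : ℕ} (hi : i + 1 < r) :
    ∀ j, j < c →
      (j < s (i + 1) → partnerCol c T i j < s i) ∧
      (s (i + 1) ≤ j → j < s (i + 1) + w →
        s i ≤ partnerCol c T i j ∧ partnerCol c T i j < s i + w) ∧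
      (s (i + 1) + w ≤ j → partnerCol c T i j < s i ∨ s i + w ≤ partnerCol c T i j) := by
  intro j
  induction j using Nat.strong_induction_on with
  | _ j IH =>
  intro hj
  obtain ⟨hPc, hPle, hPnew, hPmax⟩ := partnerCol_spec hT hi hj
  have hir : i < r := by omega
  have hfi : s i + w ≤ c := hfit i hir
  have hfi1 : s (i + 1) + w ≤ c := hfit (i + 1) hi
  refine ⟨?_, ?_, ?_⟩
  · -- j left of S in row i+1
    intro hjS
    have hb1 : T (i + 1) j < T (i + 1) (s (i + 1)) :=
      rowLT hT hi (s (i + 1)) hjS (by omega)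
    have hb2 : k < T (i + 1) (s (i + 1)) ∧ T (i + 1) (s (i + 1)) ≤ k + r * w := by
      simpa using valS hcontent (i + 1) 0 hi hw
    -- T (i+1) j ≤ k
    have hbk : T (i + 1) j ≤ k := by
      by_contra hcon
      push_neg at hcon
      have := colS hT hfit hcontent (i + 1) j hi hj hcon (by omega)
      omega
    by_contra hcon
    push_neg at hcon
    have hk : k < T i (s i) ∧ T i (s i) ≤ k + r * w := by
      simpa using valS hcontent i 0 hir hw
    have : T i (s i) ≤ T i (partnerCol c T i j) := rowLE hT hir hcon hPc
    omega
  · -- j inside S of row i+1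
    intro hjl hjr
    have hj₀w : j - s (i + 1) < w := by omega
    set j₀ := j - s (i + 1) with hj₀def
    have hje : s (i + 1) + j₀ = j := by omega
    have hex : ∃ t, s i ≤ t ∧ t ≤ s i + j₀ ∧ ∀ j' < j, partnerCol c T i j' ≠ t := by
      by_contra hcon
      push_neg at hcon
      have hsub : Finset.Icc (s i) (s i + j₀) ⊆
          (Finset.Ico (s (i + 1)) j).image (partnerCol c T i) := by
        intro t ht
        simp only [Finset.mem_Icc] at ht
        obtain ⟨j', hj', he⟩ := hcon t ht.1 ht.2
        have hj'c : j' < c := by omega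
        have hge : s (i + 1) ≤ j' := by
          by_contra hlt
          push_neg at hlt
          have := (IH j' hj' hj'c).1 hlt
          omega
        exact Finset.mem_image.mpr ⟨j', Finset.mem_Ico.mpr ⟨hge, hj'⟩, he⟩
      have h1 := Finset.card_le_card hsub
      have h2 := Finset.card_image_le
        (s := Finset.Ico (s (i + 1)) j) (f := partnerCol c T i)
      rw [Nat.card_Icc] at h1
      rw [Nat.card_Ico] at h2
      omega
    obtain ⟨t, ht1, ht2, ht3⟩ := hex
    have htc : t < c := by omega
    have htle : T i t ≤ T (i + 1) j := by
      have h1 : T i t ≤ T i (s i + j₀) := rowLE hT hir ht2 (by omega)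
      have h2 := hcol i j₀ hi hj₀w
      rw [hje] at h2
      omega
    have hlow : s i ≤ partnerCol c T i j :=
      le_trans ht1 (hPmax t htc htle ht3)
    refine ⟨hlow, ?_⟩
    by_contra hcon
    push_neg at hcon
    have hk : k < T i (s i) ∧ T i (s i) ≤ k + r * w := by
      simpa using valS hcontent i 0 hir hw
    have hgt : k < T i (partnerCol c T i j) :=
      lt_of_lt_of_le hk.1 (rowLE hT hir hlow hPc)
    have hub := valS hcontent (i + 1) j₀ hi hj₀w
    rw [hje] at hub
    have := colS hT hfit hcontent i (partnerCol c T i j) hir hPc hgt (by omega)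
    omega
  · -- j right of S in row i+1
    intro hjw
    by_contra hcon
    push_neg at hcon
    have himg : (Finset.range w).image (fun t => partnerCol c T i (s (i + 1) + t)) =
        Finset.Ico (s i) (s i + w) := by
      apply Finset.eq_of_subset_of_card_le
      · intro x hx
        simp only [Finset.mem_image, Finset.mem_range] at hx
        obtain ⟨t, ht, rfl⟩ := hx
        have h1 : s (i + 1) + t < j := by omega
        have h2 : s (i + 1) + t < c := by omega
        have := (IH _ h1 h2).2.1 (by omega) (by omega)
        simp only [Finset.mem_Ico]
        omega
      · rw [Nat.card_Ico]
        have hcard : ((Finset.range w).image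
            (fun t => partnerCol c T i (s (i + 1) + t))).card = w := by
          rw [Finset.card_image_of_injOn, Finset.card_range]
          intro a ha b hb he
          simp only [Finset.coe_range, Set.mem_Iio] at ha hb
          rcases lt_trichotomy a b with h | h | h
          · exact absurd he ((partnerCol_spec hT hi
              (show s (i + 1) + b < c by omega)).2.2.1 _ (by omega))
          · exact h
          · exact absurd he.symm ((partnerCol_spec hT hi
              (show s (i + 1) + a < c by omega)).2.2.1 _ (by omega))
        omega
    have hm : partnerCol c T i j ∈ Finset.Ico (s i) (s i + w) :=
      Finset.mem_Ico.mpr ⟨hcon.1, hcon.2⟩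
    rw [← himg] at hm
    simp only [Finset.mem_image, Finset.mem_range] at hm
    obtain ⟨t, ht, he⟩ := hm
    exact hPnew _ (by omega) he

/-- The m-diagram `φ(T)` of an `r × c` rectangular standard Young tableau: the union
over `0 ≤ i ≤ r-2` of the arcs `(T i (partnerCol c T i j), T (i+1) j)` of the greedy
matchings between consecutive rows. -/
def mDiagram (r c : ℕ) (T : ℕ → ℕ → ℕ) : Finset (ℕ × ℕ) :=
  ((Finset.range (r - 1)) ×ˢ (Finset.range c)).image
    (fun p => (T p.1 (partnerCol c T p.1 p.2), T (p.1 + 1) p.2))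

/-- Lemma (endpoints in `S`).  Let `T` be an `r × c` rectangular SYT and `S` a
uniformly proper rectangular subtableau of `T`, occupying in each row `i` the
columns `s i, …, s i + w - 1`, with content the consecutive integers
`{k+1, …, k+r*w}` and with strictly increasing columns after left-justification.
If an arc of `φ(T)` has an endpoint among the entries of `S`, then both its
endpoints are entries of `S`. -/
theorem arc_endpoints_in_subtableau (r c w k : ℕ) (T : ℕ → ℕ → ℕ) (s : ℕ → ℕ)
    (hr : 0 < r) (hT : IsRectSYT r c T)
    (hw : 0 < w) (hwc : w < c)
    (hfit : ∀ i, i < r → s i + w ≤ c)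
    (hmono : ∀ i, i + 1 < r → s (i + 1) ≤ s i)
    (hcontent : ∀ v, (k < v ∧ v ≤ k + r * w) ↔ ∃ i j, i < r ∧ j < w ∧ T i (s i + j) = v)
    (hcol : ∀ i j, i + 1 < r → j < w → T i (s i + j) < T (i + 1) (s (i + 1) + j)) :
    ∀ a b : ℕ, (a, b) ∈ mDiagram r c T →
      ((k < a ∧ a ≤ k + r * w) ∨ (k < b ∧ b ≤ k + r * w)) →
      ((k < a ∧ a ≤ k + r * w) ∧ (k < b ∧ b ≤ k + r * w)) := by
  intro a b hab hor
  simp only [mDiagram, Finset.mem_image, Finset.mem_product, Finset.mem_range] at hab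
  obtain ⟨⟨i, j⟩, ⟨hi1, hj⟩, he⟩ := hab
  simp only [Prod.mk.injEq] at he
  obtain ⟨ha, hb⟩ := he
  subst ha hb
  have hi : i + 1 < r := by omega
  obtain ⟨hPc, hPle, -, -⟩ := partnerCol_spec hT hi hj
  have C := classify hT hw hfit hcontent hcol hi j hj
  rcases hor with ⟨ha1, ha2⟩ | ⟨hb1, hb2⟩
  · have hPrange := colS hT hfit hcontent i (partnerCol c T i j) (by omega) hPc ha1 ha2
    rcases Nat.lt_or_ge j (s (i + 1)) with h | h
    · exact absurd (C.1 h) (by omega)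
    rcases Nat.lt_or_ge j (s (i + 1) + w) with h2 | h2
    · have hv := valS hcontent (i + 1) (j - s (i + 1)) hi (by omega)
      have hje : s (i + 1) + (j - s (i + 1)) = j := by omega
      rw [hje] at hv
      exact ⟨⟨ha1, ha2⟩, hv⟩
    · exact absurd (C.2.2 h2) (by omega)
  · have hbr := colS hT hfit hcontent (i + 1) j hi hj hb1 hb2
    have hP := C.2.1 hbr.1 (by omega)
    have hv := valS hcontent i (partnerCol c T i j - s i) (by omega) (by omega)
    have hje : s i + (partnerCol c T i j - s i) = partnerCol c T i j := by omega
    rw [hje] at hv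
    exact ⟨hv, ⟨hb1, hb2⟩⟩
end

section
/- Let T be a rectangular standard Young tableau written as the horizontal concatenation T = T_1 S T_2, where S is a uniformly proper rectangular subtableau and T_1 is nonempty. During jeu de taquin promotion of T, the sliding path of the empty box moves only horizontally within S; i.e., whenever the empty box occupies a position inside S (other than at the right boundary of its row of S), the next slide moves the entry to its right leftward, never the entry below upward. -/
/-- During jeu de taquin promotion of `T = T₁ S T₂` (with `S` a uniformly proper
rectangular subtableau occupying columns `s i, …, s i + w - 1` of each row `i`,
and `T₁` nonempty), the sliding path of the empty box moves only horizontally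
within `S` : whenever the empty box occupies a position of `S` other than the right
boundary of its row of `S`, the next slide moves the entry to its right leftward. -/
theorem sliding_path_horizontal_in_subtableau (r c w k : ℕ) (T : ℕ → ℕ → ℕ) (s : ℕ → ℕ)
    (hr : 0 < r) (hT : IsRectSYT r c T)
    (hw : 0 < w) (hwc : w < c)
    (hfit : ∀ i, i < r → s i + w ≤ c)
    (hmono : ∀ i, i + 1 < r → s (i + 1) ≤ s i)
    (hT1 : 0 < s 0)
    (hcontent : ∀ v, (k < v ∧ v ≤ k + r * w) ↔ ∃ i j, i < r ∧ j < w ∧ T i (s i + j) = v)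
    (hcol : ∀ i j, i + 1 < r → j < w → T i (s i + j) < T (i + 1) (s (i + 1) + j)) :
    ∀ m i j, slidePath r c T m = (i, j) → i < r → s i ≤ j → j + 1 < s i + w →
      slidePath r c T (m + 1) = (i, j + 1) := by
  obtain ⟨hrow, hcolT, hbd, hsurj⟩ := hT
  have hunf : ∀ n, slidePath r c T (n + 1) = slideNext r c T (slidePath r c T n) :=
    fun n => rfl
  -- weak row monotonicity
  have hrow_le : ∀ i j j', i < r → j ≤ j' → j' < c → T i j ≤ T i j' := by
    intro i j j' hi hjj hj'c
    obtain ⟨d, rfl⟩ := Nat.exists_eq_add_of_le hjj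
    clear hjj
    induction d with
    | zero => simp
    | succ d ihd =>
      have h2 := hrow i (j + d) hi (by omega)
      have h3 := ihd (by omega)
      have h4 : j + (d + 1) = j + d + 1 := by omega
      rw [h4]
      omega
  -- injectivity of entries
  have hinj : ∀ i j i' j', i < r → j < c → i' < r → j' < c → T i j = T i' j' →
      i = i' ∧ j = j' := by
    classical
    let F : Fin r × Fin c → Fin (r * c) := fun p =>
      ⟨T p.1 p.2 - 1, by have := hbd p.1 p.2 p.1.2 p.2.2; omega⟩
    have hFsurj : Function.Surjective F := by
      intro v
      obtain ⟨i, j, hi, hj, hv⟩ := hsurj (v.1 + 1) (by omega) (by have := v.2; omega)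
      refine ⟨(⟨i, hi⟩, ⟨j, hj⟩), ?_⟩
      apply Fin.ext
      simp [F, hv]
    have hFinj : Function.Injective F := by
      have hcard : Fintype.card (Fin r × Fin c) = Fintype.card (Fin (r * c)) := by simp
      exact ((Fintype.bijective_iff_surjective_and_card F).mpr ⟨hFsurj, hcard⟩).1
    intro i j i' j' hi hj hi' hj' hTe
    have h1 := (hbd i j hi hj).1
    have h2 := hFinj (a₁ := (⟨i, hi⟩, ⟨j, hj⟩)) (a₂ := (⟨i', hi'⟩, ⟨j', hj'⟩))
      (by apply Fin.ext; simp only [F]; omega)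
    simpa [Prod.ext_iff, Fin.ext_iff] using h2
  have hSmem : ∀ i a, i < r → a < w → k < T i (s i + a) ∧ T i (s i + a) ≤ k + r * w :=
    fun i a hi ha => (hcontent _).mpr ⟨i, a, hi, ha, rfl⟩
  -- entries strictly left of S are ≤ k
  have hT1small : ∀ i j, i < r → j < s i → T i j ≤ k := by
    intro i j hi hj
    by_contra hk
    have hsic : s i < c := by have := hfit i hi; omega
    have hle : T i j ≤ T i (s i) := hrow_le i j (s i) hi (by omega) hsic
    have hub := (hSmem i 0 hi hw).2
    rw [Nat.add_zero] at hub
    obtain ⟨i2, j2, hi2, hj2, he⟩ := (hcontent (T i j)).mp ⟨by omega, by omega⟩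
    obtain ⟨heq, hje⟩ := hinj i2 (s i2 + j2) i j hi2 (by have := hfit i2 hi2; omega)
      hi (by omega) he
    subst heq
    omega
  -- entries strictly right of S are > k + r*w
  have hT2big : ∀ i j, i < r → s i + w ≤ j → j < c → k + r * w < T i j := by
    intro i j hi hj hjc
    by_contra hk
    have hge : T i (s i + (w - 1)) ≤ T i j :=
      hrow_le i (s i + (w - 1)) j hi (by omega) hjc
    have hlb := (hSmem i (w - 1) hi (by omega)).1
    obtain ⟨i2, j2, hi2, hj2, he⟩ := (hcontent (T i j)).mp ⟨by omega, by omega⟩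
    obtain ⟨heq, hje⟩ := hinj i2 (s i2 + j2) i j hi2 (by have := hfit i2 hi2; omega)
      hi hjc he
    subst heq
    omega
  -- static comparison forcing a rightward slide when s(i+1) < s i
  have hL5 : ∀ i j, i + 1 < r → s i ≤ j → j + 1 < s i + w → s (i + 1) < s i →
      T i (j + 1) ≤ T (i + 1) j := by
    intro i j hi hsj hjw hlt
    have hi' : i < r := by omega
    have hfi := hfit i hi'
    have hfi1 := hfit (i + 1) hi
    by_cases hb : j < s (i + 1) + w
    · obtain ⟨b, rfl⟩ : ∃ b, j = s (i + 1) + b := ⟨j - s (i + 1), by omega⟩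
      have hbw : b < w := by omega
      have h1 : T i (s (i + 1) + b + 1) ≤ T i (s i + b) :=
        hrow_le i _ _ hi' (by omega) (by omega)
      have h2 := hcol i b hi hbw
      omega
    · obtain ⟨a, ha⟩ : ∃ a, j + 1 = s i + a := ⟨j + 1 - s i, by omega⟩
      have h1 : T i (j + 1) ≤ k + r * w := by
        rw [ha]; exact (hSmem i a hi' (by omega)).2
      have h2 := hT2big (i + 1) j hi (by omega) (by omega)
      omega
  -- the box is never inside S (off the right boundary) in a row with s(i+1) = s i
  have hA : ∀ m i j, slidePath r c T m = (i, j) → i + 1 < r → s i ≤ j →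
      j + 1 < s i + w → s (i + 1) = s i → False := by
    intro m
    induction m with
    | zero =>
      intro i j h hi hsj hjw hd
      simp only [slidePath, Prod.mk.injEq] at h
      obtain ⟨rfl, rfl⟩ := h
      omega
    | succ m ih =>
      intro i j h hi hsj hjw hd
      have hi' : i < r := by omega
      have hjc : j + 1 < c := by have := hfit i hi'; omega
      rcases hq : slidePath r c T m with ⟨i₀, j₀⟩
      have hstep : slideNext r c T (i₀, j₀) = (i, j) := by
        rw [hunf, hq] at h; exact h
      unfold slideNext at hstep
      simp only [Prod.mk.injEq] at hstep
      split_ifs at hstep with h1 h2 h3 h4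
      · -- rightward slide (i₀, j₀+1) = (i, j)
        have he1 := congrArg Prod.fst hstep
        have he2 := congrArg Prod.snd hstep
        simp only at he1 he2
        subst he1
        subst he2
        by_cases hs0 : s i₀ ≤ j₀
        · exact ih i₀ j₀ hq hi hs0 (by omega) hd
        · -- the box entered S from the left while s(i+1) = s i : impossible
          have hk1 := hT1small (i₀ + 1) j₀ hi (by omega)
          have hk2 := (hSmem i₀ 0 (by omega) hw).1
          rw [Nat.add_zero] at hk2
          have hje : j₀ + 1 = s i₀ := by omega
          rw [hje] at h2
          omega
      · -- downward slide (i₀+1, j₀) = (i, j)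
        have he1 := congrArg Prod.fst hstep
        have he2 := congrArg Prod.snd hstep
        simp only at he1 he2
        subst he1
        subst he2
        by_cases hs0 : s i₀ ≤ j₀
        · -- the box was inside S in row i₀ and must have slid right
          have hmor : s (i₀ + 1) ≤ s i₀ := hmono i₀ (by omega)
          have hjw0 : j₀ + 1 < s i₀ + w := by omega
          rcases lt_or_eq_of_le hmor with hlt | heq
          · exact h2 (hL5 i₀ j₀ (by omega) hs0 hjw0 hlt)
          · exact ih i₀ j₀ hq (by omega) hs0 hjw0 heq
        · -- the box was in T₁ above an S cell: statically impossible to slide down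
          obtain ⟨a, ha⟩ : ∃ a, j₀ = s (i₀ + 1) + a := ⟨j₀ - s (i₀ + 1), by omega⟩
          have haw : a < w := by omega
          have hfi0 := hfit i₀ (by omega)
          have hA1 : T i₀ (j₀ + 1) ≤ T i₀ (s i₀ + a) :=
            hrow_le i₀ _ _ (by omega) (by omega) (by omega)
          have hA2 := hcol i₀ a (by omega) haw
          rw [← ha] at hA2
          omega
      · -- i₀+1 ≥ r here, but i = i₀ and i+1 < r
        have he1 := congrArg Prod.fst hstep
        have he2 := congrArg Prod.snd hstep
        simp only at he1 he2
        subst he1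
        omega
      · -- j₀+1 ≥ c here, but j = j₀ and j+1 < c
        have he1 := congrArg Prod.fst hstep
        have he2 := congrArg Prod.snd hstep
        simp only at he1 he2
        subst he1
        subst he2
        omega
      · -- the box did not move
        have he1 := congrArg Prod.fst hstep
        have he2 := congrArg Prod.snd hstep
        simp only at he1 he2
        subst he1
        subst he2
        exact ih i₀ j₀ hq hi hsj hjw hd
  -- main statement
  intro m i j h hi hsj hjw
  have hjc : j + 1 < c := by have := hfit i hi; omega
  rw [hunf, h]
  by_cases hir : i + 1 < r
  · have hle : T i (j + 1) ≤ T (i + 1) j := by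
      rcases lt_or_eq_of_le (hmono i hir) with hlt | heq
      · exact hL5 i j hir hsj hjw hlt
      · exact (hA m i j h hir hsj hjw heq).elim
    simp [slideNext, hir, hjc, hle]
  · simp [slideNext, hir, hjc]
end

section
/- Let T be a rectangular standard Young tableau with uniformly proper rectangular subtableau S, written T = T_1 S T_2 with T_1 nonempty. Then P(T) = T_1' S' T_2' where S' is a uniformly proper rectangular subtableau of P(T) obtained from S by decrementing every entry by 1 (hence uniformly equivalent to S), and T_1' T_2' is equivalent to P(T_1 T_2). -/
/-- Delete the `w` columns of the subtableau starting at column `s i` in each row: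
the horizontal concatenation `T₁ T₂`. -/
def delCols (A : ℕ → ℕ → ℕ) (s : ℕ → ℕ) (w : ℕ) : ℕ → ℕ → ℕ :=
  fun i j => if j < s i then A i j else A i (j + w)

/-- Standardization of an `r × c` filling: relabel the entries order-preservingly by
`1, …, r*c`. -/
def stdFill (r c : ℕ) (A : ℕ → ℕ → ℕ) : ℕ → ℕ → ℕ :=
  fun i j => (((Finset.range r) ×ˢ (Finset.range c)).filter
    (fun p => A p.1 p.2 ≤ A i j)).card

/-- Two `r × c` fillings (with distinct entries) are equivalent: they coincide after
relabeling the entries of each order-preservingly by `1, …, r*c`. -/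
def EquivFilling (r c : ℕ) (A B : ℕ → ℕ → ℕ) : Prop :=
  ∀ i j i' j', i < r → j < c → i' < r → j' < c → (A i j < A i' j' ↔ B i j < B i' j')

section Generic

variable {r c : ℕ} {A : ℕ → ℕ → ℕ}

lemma slideNext_right {i j : ℕ} (h2 : j + 1 < c)
    (h : i + 1 < r → A i (j+1) ≤ A (i+1) j) : slideNext r c A (i, j) = (i, j+1) := by
  unfold slideNext
  by_cases h1 : i + 1 < r
  · simp [h1, h2, h h1]
  · simp [h1, h2]

lemma slideNext_down {i j : ℕ} (h1 : i + 1 < r)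
    (h : j + 1 < c → ¬ (A i (j+1) ≤ A (i+1) j)) : slideNext r c A (i, j) = (i+1, j) := by
  unfold slideNext
  by_cases h2 : j + 1 < c
  · simp [h1, h2, h h2]
  · simp [h1, h2]

lemma slideNext_stuck {i j : ℕ} (h1 : ¬ (i + 1 < r)) (h2 : ¬ (j + 1 < c)) :
    slideNext r c A (i, j) = (i, j) := by
  unfold slideNext
  simp [h1, h2]

lemma slideNext_cases (r c : ℕ) (A : ℕ → ℕ → ℕ) (i j : ℕ) :
    (slideNext r c A (i, j) = (i, j+1) ∧ j + 1 < c) ∨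
    (slideNext r c A (i, j) = (i+1, j) ∧ i + 1 < r) ∨
    (slideNext r c A (i, j) = (i, j) ∧ ¬ (i + 1 < r) ∧ ¬ (j + 1 < c)) := by
  unfold slideNext
  by_cases h1 : i + 1 < r <;> by_cases h2 : j + 1 < c
  · by_cases h3 : A i (j+1) ≤ A (i+1) j <;> simp [h1, h2, h3]
  · simp [h1, h2]
  · simp [h1, h2]
  · simp [h1, h2]

lemma path_succ (n : ℕ) :
    slidePath r c A (n+1) = slideNext r c A ((slidePath r c A n).1, (slidePath r c A n).2) :=
  rfl

lemma path_bounds (hr : 0 < r) (hc : 0 < c) (m : ℕ) :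
    (slidePath r c A m).1 < r ∧ (slidePath r c A m).2 < c := by
  induction m with
  | zero => exact ⟨hr, hc⟩
  | succ n ih =>
    obtain ⟨p1, p2⟩ := ih
    rcases slideNext_cases r c A (slidePath r c A n).1 (slidePath r c A n).2 with
      ⟨h, hb⟩ | ⟨h, hb⟩ | ⟨h, _⟩ <;> rw [path_succ, h] <;> exact ⟨by omega, by omega⟩

/-- Structured step case split at the level of paths. -/
lemma path_step (hr : 0 < r) (hc : 0 < c) (n : ℕ) :
    (slidePath r c A (n+1) = ((slidePath r c A n).1, (slidePath r c A n).2 + 1)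
        ∧ (slidePath r c A n).2 + 1 < c) ∨
    (slidePath r c A (n+1) = ((slidePath r c A n).1 + 1, (slidePath r c A n).2)
        ∧ (slidePath r c A n).1 + 1 < r) ∨
    (slidePath r c A (n+1) = slidePath r c A n
        ∧ (slidePath r c A n).1 = r - 1 ∧ (slidePath r c A n).2 = c - 1) := by
  obtain ⟨p1, p2⟩ := path_bounds (A := A) hr hc n
  rcases slideNext_cases r c A (slidePath r c A n).1 (slidePath r c A n).2 with
    ⟨h, hb⟩ | ⟨h, hb⟩ | ⟨h, hb1, hb2⟩
  · exact Or.inl ⟨by rw [path_succ, h], hb⟩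
  · exact Or.inr (Or.inl ⟨by rw [path_succ, h], hb⟩)
  · exact Or.inr (Or.inr ⟨by rw [path_succ, h], by omega, by omega⟩)

lemma path_sum (hr : 0 < r) (hc : 0 < c) (m : ℕ) :
    (slidePath r c A m).1 + (slidePath r c A m).2 = min m (r + c - 2) := by
  induction m with
  | zero => simp [slidePath]
  | succ n ih =>
    obtain ⟨p1, p2⟩ := path_bounds (A := A) hr hc n
    rcases path_step (A := A) hr hc n with ⟨h, hb⟩ | ⟨h, hb⟩ | ⟨h, hb1, hb2⟩ <;>
      rw [h] <;> first | omega | (simp; omega)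

lemma path_corner (hr : 0 < r) (hc : 0 < c) {m : ℕ} (h : r + c - 2 ≤ m) :
    slidePath r c A m = (r - 1, c - 1) := by
  obtain ⟨p1, p2⟩ := path_bounds (A := A) hr hc m
  have hs := path_sum (A := A) hr hc m
  have h1 : (slidePath r c A m).1 = r - 1 ∧ (slidePath r c A m).2 = c - 1 := by omega
  exact Prod.ext h1.1 h1.2

lemma path_first (hr : 0 < r) (hc : 0 < c) {m i j : ℕ} (h : slidePath r c A m = (i, j))
    (hne : (i, j) ≠ (r - 1, c - 1)) : m = i + j ∧ i + j < r + c - 2 := by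
  have hs : i + j = min m (r + c - 2) := by
    have := path_sum (A := A) hr hc m; rw [h] at this; exact this
  have q1 : i < r := by have := (path_bounds (A := A) hr hc m).1; rw [h] at this; exact this
  have q2 : j < c := by have := (path_bounds (A := A) hr hc m).2; rw [h] at this; exact this
  have hne2 : ¬ (i = r - 1 ∧ j = c - 1) := by
    rintro ⟨a, b⟩; exact hne (by rw [a, b])
  omega

lemma promote_eq_on (hr : 0 < r) (hc : 0 < c) {m i j : ℕ}
    (h : slidePath r c A m = (i, j)) (hne : (i, j) ≠ (r - 1, c - 1)) :
    promote r c A i j = A (slidePath r c A (m+1)).1 (slidePath r c A (m+1)).2 - 1 := by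
  unfold promote
  have hcorner : slidePath r c A (r + c) = (r - 1, c - 1) := path_corner hr hc (by omega)
  rw [if_neg (by rw [hcorner]; exact hne)]
  have hex : ∃ n, slidePath r c A n = (i, j) := ⟨m, h⟩
  rw [dif_pos hex]
  have hfind : Nat.find hex = m := by
    obtain ⟨hm1, hm2⟩ := path_first hr hc h hne
    obtain ⟨hn1, hn2⟩ := path_first hr hc (Nat.find_spec hex) hne
    omega
  rw [hfind]

lemma promote_eq_off {i j : ℕ}
    (h : ∀ m, slidePath r c A m ≠ (i, j)) : promote r c A i j = A i j - 1 := by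
  unfold promote
  rw [if_neg (fun hh => h (r+c) hh.symm), dif_neg (by push_neg; exact h)]

lemma promote_corner (hr : 0 < r) (hc : 0 < c) :
    promote r c A (r - 1) (c - 1) = r * c := by
  unfold promote
  rw [if_pos (path_corner hr hc (by omega)).symm]

lemma path_row_mono (hr : 0 < r) (hc : 0 < c) {n n' : ℕ} (h : n ≤ n') :
    (slidePath r c A n).1 ≤ (slidePath r c A n').1 := by
  induction n' with
  | zero =>
    have : n = 0 := by omega
    rw [this]
  | succ m ih =>
    rcases Nat.lt_or_ge n (m+1) with hlt | hge
    · refine le_trans (ih (by omega)) ?_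
      rcases path_step (A := A) hr hc m with ⟨h, _⟩ | ⟨h, _⟩ | ⟨h, _⟩ <;> rw [h] <;> simp
    · have : n = m + 1 := by omega
      rw [this]

lemma path_mem (hr : 0 < r) (hc : 0 < c) {m i j : ℕ} (h : slidePath r c A m = (i, j)) :
    slidePath r c A (i + j) = (i, j) := by
  by_cases hne : (i, j) = (r - 1, c - 1)
  · rw [Prod.mk.injEq] at hne
    obtain ⟨e1, e2⟩ := hne
    subst e1; subst e2
    exact path_corner hr hc (by omega)
  · obtain ⟨h1, _⟩ := path_first hr hc h hne
    rw [← h1]; exact h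

end Generic

section Generic2
variable {r c : ℕ} {A : ℕ → ℕ → ℕ}

lemma slideNext_right_cond {i j : ℕ} (h1 : i + 1 < r) (h2 : j + 1 < c)
    (h : slideNext r c A (i, j) = (i, j+1)) : A i (j+1) ≤ A (i+1) j := by
  by_contra hcon
  rw [slideNext_down h1 (fun _ => hcon)] at h
  exact absurd (congrArg Prod.fst h) (by simp)

end Generic2

section Generic3
variable {r c : ℕ} {A : ℕ → ℕ → ℕ}

lemma slideNext_down_cond {i j : ℕ} (h1 : i + 1 < r) (h2 : j + 1 < c)
    (h : slideNext r c A (i, j) = (i+1, j)) : ¬ (A i (j+1) ≤ A (i+1) j) := by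
  intro hcon
  rw [slideNext_right h2 (fun _ => hcon)] at h
  exact absurd (congrArg Prod.fst h) (by simp)

end Generic3
section Std

variable {r c : ℕ} {A : ℕ → ℕ → ℕ}

lemma stdFill_le_iff {i j i' j' : ℕ} (hi : i < r) (hj : j < c) (hi' : i' < r) (hj' : j' < c) :
    stdFill r c A i j ≤ stdFill r c A i' j' ↔ A i j ≤ A i' j' := by
  constructor
  · intro h
    by_contra hc2
    push_neg at hc2
    have hsub : ((Finset.range r) ×ˢ (Finset.range c)).filter (fun p => A p.1 p.2 ≤ A i' j') ⊆
        ((Finset.range r) ×ˢ (Finset.range c)).filter (fun p => A p.1 p.2 ≤ A i j) := by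
      intro p hp
      rw [Finset.mem_filter] at hp ⊢
      exact ⟨hp.1, le_trans hp.2 (le_of_lt hc2)⟩
    have hmem : (i, j) ∈ ((Finset.range r) ×ˢ (Finset.range c)).filter
        (fun p => A p.1 p.2 ≤ A i j) := by
      simp [Finset.mem_filter, Finset.mem_product, hi, hj]
    have hnmem : (i, j) ∉ ((Finset.range r) ×ˢ (Finset.range c)).filter
        (fun p => A p.1 p.2 ≤ A i' j') := by
      simp only [Finset.mem_filter, Finset.mem_product, Finset.mem_range]
      push_neg
      intro _
      omega
    have : ((Finset.range r) ×ˢ (Finset.range c)).filter (fun p => A p.1 p.2 ≤ A i' j')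
        ⊂ ((Finset.range r) ×ˢ (Finset.range c)).filter (fun p => A p.1 p.2 ≤ A i j) :=
      Finset.ssubset_iff_of_subset hsub |>.mpr ⟨(i, j), hmem, hnmem⟩
    have := Finset.card_lt_card this
    unfold stdFill at h
    omega
  · intro h
    apply Finset.card_le_card
    intro p hp
    rw [Finset.mem_filter] at hp ⊢
    exact ⟨hp.1, le_trans hp.2 h⟩

lemma stdFill_lt_iff {i j i' j' : ℕ} (hi : i < r) (hj : j < c) (hi' : i' < r) (hj' : j' < c) :
    stdFill r c A i j < stdFill r c A i' j' ↔ A i j < A i' j' := by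
  rw [← not_le, ← not_le, not_iff_not, stdFill_le_iff hi' hj' hi hj]

lemma stdFill_pos {i j : ℕ} (hi : i < r) (hj : j < c) : 1 ≤ stdFill r c A i j := by
  have : (i, j) ∈ ((Finset.range r) ×ˢ (Finset.range c)).filter
      (fun p => A p.1 p.2 ≤ A i j) := by
    simp [Finset.mem_filter, Finset.mem_product, hi, hj]
  exact Finset.card_pos.mpr ⟨(i, j), this⟩

lemma stdFill_le_card (i j : ℕ) : stdFill r c A i j ≤ r * c := by
  calc stdFill r c A i j ≤ ((Finset.range r) ×ˢ (Finset.range c)).card :=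
        Finset.card_le_card (Finset.filter_subset _ _)
    _ = r * c := by simp

end Std
/-- Bundle of the hypotheses of the main theorem. -/
structure Ctx (r c w k : ℕ) (T : ℕ → ℕ → ℕ) (s : ℕ → ℕ) : Prop where
  hr : 0 < r
  hT : IsRectSYT r c T
  hw : 0 < w
  hwc : w < c
  hfit : ∀ i, i < r → s i + w ≤ c
  hmono : ∀ i, i + 1 < r → s (i + 1) ≤ s i
  hT1 : 0 < s 0
  hcontent : ∀ v, (k < v ∧ v ≤ k + r * w) ↔ ∃ i j, i < r ∧ j < w ∧ T i (s i + j) = v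
  hcol : ∀ i j, i + 1 < r → j < w → T i (s i + j) < T (i + 1) (s (i + 1) + j)

section Ctx

variable {r c w k : ℕ} {T : ℕ → ℕ → ℕ} {s : ℕ → ℕ}

lemma Ctx.hc (hC : Ctx r c w k T s) : 0 < c := lt_trans hC.hw hC.hwc

lemma Ctx.row_lt (hC : Ctx r c w k T s) {i j j' : ℕ} (hi : i < r) (h : j < j') (hj' : j' < c) :
    T i j < T i j' := by
  induction j' with
  | zero => omega
  | succ n ih =>
    rcases Nat.lt_or_ge j n with h2 | h2
    · exact lt_trans (ih (by omega) (by omega)) (hC.hT.1 i n hi hj')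
    · have : j = n := by omega
      rw [this]
      exact hC.hT.1 i n hi hj'

lemma Ctx.row_le (hC : Ctx r c w k T s) {i j j' : ℕ} (hi : i < r) (h : j ≤ j') (hj' : j' < c) :
    T i j ≤ T i j' := by
  rcases Nat.lt_or_ge j j' with h2 | h2
  · exact le_of_lt (hC.row_lt hi h2 hj')
  · have : j = j' := by omega
    rw [this]

lemma Ctx.col_lt (hC : Ctx r c w k T s) {i i' j : ℕ} (h : i < i') (hi' : i' < r) (hj : j < c) :
    T i j < T i' j := by
  induction i' with
  | zero => omega
  | succ n ih =>
    rcases Nat.lt_or_ge i n with h2 | h2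
    · exact lt_trans (ih (by omega) (by omega)) (hC.hT.2.1 n j hi' hj)
    · have : i = n := by omega
      rw [this]
      exact hC.hT.2.1 n j hi' hj

lemma Ctx.s_mono (hC : Ctx r c w k T s) {i i' : ℕ} (h : i ≤ i') (hi' : i' < r) : s i' ≤ s i := by
  induction i' with
  | zero =>
    have : i = 0 := by omega
    rw [this]
  | succ n ih =>
    rcases Nat.lt_or_ge i (n+1) with h2 | h2
    · exact le_trans (hC.hmono n hi') (ih (by omega) (by omega))
    · have : i = n + 1 := by omega
      rw [this]

lemma Ctx.Tpos (hC : Ctx r c w k T s) {i j : ℕ} (hi : i < r) (hj : j < c) : 1 ≤ T i j := (hC.hT.2.2.1 i j hi hj).1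

lemma Ctx.Tmax (hC : Ctx r c w k T s) {i j : ℕ} (hi : i < r) (hj : j < c) : T i j ≤ r * c := (hC.hT.2.2.1 i j hi hj).2


lemma Ctx.Tinj (hC : Ctx r c w k T s) {i j i' j' : ℕ} (hi : i < r) (hj : j < c)
    (hi' : i' < r) (hj' : j' < c) (h : T i j = T i' j') : i = i' ∧ j = j' := by
  have key := Finset.inj_on_of_surj_on_of_card_le
    (s := (Finset.range r) ×ˢ (Finset.range c)) (t := Finset.Icc 1 (r * c))
    (fun p _ => T p.1 p.2)
    (fun p hp => by
      simp only [Finset.mem_product, Finset.mem_range] at hp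
      simp only [Finset.mem_Icc]
      exact ⟨hC.Tpos hp.1 hp.2, hC.Tmax hp.1 hp.2⟩)
    (fun v hv => by
      simp only [Finset.mem_Icc] at hv
      obtain ⟨a, b, ha, hb, hab⟩ := hC.hT.2.2.2 v hv.1 hv.2
      exact ⟨(a, b), by simp [Finset.mem_product, ha, hb], hab⟩)
    (by simp)
    (a₁ := (i, j)) (by simp [Finset.mem_product, hi, hj])
    (a₂ := (i', j')) (by simp [Finset.mem_product, hi', hj']) h
  exact ⟨congrArg Prod.fst key, congrArg Prod.snd key⟩

lemma Ctx.SvalT (hC : Ctx r c w k T s) {i j : ℕ} (hi : i < r) (hj : j < w) :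
    k < T i (s i + j) ∧ T i (s i + j) ≤ k + r * w :=
  (hC.hcontent _).mpr ⟨i, j, hi, hj, rfl⟩

lemma Ctx.Scell (hC : Ctx r c w k T s) {i j : ℕ} (hi : i < r) (hj : j < c) (hv1 : k < T i j)
    (hv2 : T i j ≤ k + r * w) : s i ≤ j ∧ j < s i + w := by
  obtain ⟨a, b, ha, hb, hab⟩ := (hC.hcontent (T i j)).mp ⟨hv1, hv2⟩
  have hbc : s a + b < c := by
    have := hC.hfit a ha; omega
  obtain ⟨e1, e2⟩ := hC.Tinj ha hbc hi hj hab
  subst e1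
  omega

lemma Ctx.T1le (hC : Ctx r c w k T s) {i j : ℕ} (hi : i < r) (hj : j < s i) : T i j ≤ k := by
  have hsc : s i + w ≤ c := hC.hfit i hi
  have hw' : 0 < w := hC.hw
  have h1 : T i j < T i (s i) := hC.row_lt hi hj (by omega)
  obtain ⟨h2a, h2b⟩ : k < T i (s i + 0) ∧ T i (s i + 0) ≤ k + r * w := hC.SvalT hi hC.hw
  rw [Nat.add_zero] at h2a h2b
  by_contra hcon
  push_neg at hcon
  have h3 : T i j ≤ k + r * w := by omega
  have := hC.Scell hi (by omega) hcon h3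
  omega

lemma Ctx.T2gt (hC : Ctx r c w k T s) {i j : ℕ} (hi : i < r) (hj1 : s i + w ≤ j) (hj2 : j < c) :
    k + r * w < T i j := by
  have hw' : 0 < w := hC.hw
  have h1 : T i (s i + (w - 1)) < T i j := hC.row_lt hi (by omega) hj2
  obtain ⟨h2a, h2b⟩ := hC.SvalT hi (show w - 1 < w by omega)
  by_contra hcon
  push_neg at hcon
  have := hC.Scell hi hj2 (by omega) hcon
  omega

end Ctx
/-- The first step at which the sliding path reaches the columns of `S`. -/
noncomputable def Kv (r c : ℕ) (T : ℕ → ℕ → ℕ) (s : ℕ → ℕ) : ℕ :=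
  sInf {m | s ((slidePath r c T m).1) ≤ (slidePath r c T m).2}

/-- The row in which the sliding path crosses `S`. -/
noncomputable def i0v (r c : ℕ) (T : ℕ → ℕ → ℕ) (s : ℕ → ℕ) : ℕ :=
  (slidePath r c T (Kv r c T s)).1

section Path

variable {r c w k : ℕ} {T : ℕ → ℕ → ℕ} {s : ℕ → ℕ}

lemma Ctx.Kne (hC : Ctx r c w k T s) :
    {m | s ((slidePath r c T m).1) ≤ (slidePath r c T m).2}.Nonempty := by
  refine ⟨r + c, ?_⟩
  have hcorner : slidePath r c T (r + c) = (r - 1, c - 1) :=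
    path_corner hC.hr hC.hc (by omega)
  have hf := hC.hfit (r - 1) (by have := hC.hr; omega)
  have hw' := hC.hw
  simp only [Set.mem_setOf_eq, hcorner]
  omega

lemma Ctx.Kmem (hC : Ctx r c w k T s) :
    s ((slidePath r c T (Kv r c T s)).1) ≤ (slidePath r c T (Kv r c T s)).2 :=
  Nat.sInf_mem hC.Kne

lemma Ctx.preK (hC : Ctx r c w k T s) {m : ℕ} (h : m < Kv r c T s) :
    (slidePath r c T m).2 < s ((slidePath r c T m).1) := by
  have := Nat.notMem_of_lt_sInf (s := {m | s ((slidePath r c T m).1) ≤ (slidePath r c T m).2}) h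
  simp only [Set.mem_setOf_eq, not_le] at this
  exact this

lemma Ctx.Kpos (hC : Ctx r c w k T s) : 0 < Kv r c T s := by
  by_contra h
  push_neg at h
  have h0 : Kv r c T s = 0 := by omega
  have hm := hC.Kmem
  rw [h0] at hm
  have hm2 : s 0 ≤ 0 := hm
  have := hC.hT1
  omega

lemma Ctx.Kle (hC : Ctx r c w k T s) : Kv r c T s ≤ r + c - 2 := by
  apply Nat.sInf_le
  have hcorner : slidePath r c T (r + c - 2) = (r - 1, c - 1) :=
    path_corner hC.hr hC.hc (le_refl _)
  have hf := hC.hfit (r - 1) (by have := hC.hr; omega)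
  have hw' := hC.hw
  simp only [Set.mem_setOf_eq, hcorner]
  omega

/-- Entry forcing: just left of (or inside) the band, above a band cell, the slide
prefers the right neighbour. -/
lemma Ctx.EF (hC : Ctx r c w k T s) {i j : ℕ} (h1 : i + 1 < r) (h2 : s (i+1) ≤ j)
    (h3 : j + 1 ≤ s i) : T i (j+1) ≤ T (i+1) j := by
  have hi : i < r := by omega
  have hfi : s i + w ≤ c := hC.hfit i hi
  have hfi1 : s (i+1) + w ≤ c := hC.hfit (i+1) h1
  have hw' := hC.hw
  rcases Nat.lt_or_ge (j+1) (s i) with hlt | hge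
  · have hL : T i (j+1) ≤ k := hC.T1le hi hlt
    rcases Nat.lt_or_ge j (s (i+1) + w) with hb | hb
    · obtain ⟨hv1, hv2⟩ := hC.SvalT h1 (show j - s (i+1) < w by omega)
      have he : s (i+1) + (j - s (i+1)) = j := by omega
      rw [he] at hv1 hv2
      omega
    · have := hC.T2gt h1 hb (by omega)
      omega
  · have hj1 : j + 1 = s i := by omega
    rcases Nat.lt_or_ge j (s (i+1) + w) with hb | hb
    · have ha : j - s (i+1) < w := by omega
      have hchain1 : T i (j+1) ≤ T i (s i + (j - s (i+1))) :=
        hC.row_le hi (by omega) (by omega)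
      have hchain2 : T i (s i + (j - s (i+1))) < T (i+1) (s (i+1) + (j - s (i+1))) :=
        hC.hcol i (j - s (i+1)) h1 ha
      have he : s (i+1) + (j - s (i+1)) = j := by omega
      rw [he] at hchain2
      omega
    · have hgt := hC.T2gt h1 hb (by omega)
      obtain ⟨hv1, hv2⟩ := hC.SvalT hi (show 0 < w from hw')
      have he : s i + 0 = j + 1 := by omega
      rw [he] at hv1 hv2
      omega

lemma Ctx.entry (hC : Ctx r c w k T s) :
    slidePath r c T (Kv r c T s) = (i0v r c T s, s (i0v r c T s)) ∧
    slidePath r c T (Kv r c T s - 1) = (i0v r c T s, s (i0v r c T s) - 1) ∧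
    1 ≤ s (i0v r c T s) ∧ Kv r c T s = i0v r c T s + s (i0v r c T s) := by
  have hKpos := hC.Kpos
  have hprev : Kv r c T s - 1 + 1 = Kv r c T s := by omega
  obtain ⟨a, b, hab⟩ : ∃ a b, slidePath r c T (Kv r c T s - 1) = (a, b) := ⟨_, _, rfl⟩
  have hpre : b < s a := by
    have := hC.preK (show Kv r c T s - 1 < Kv r c T s by omega)
    rw [hab] at this; exact this
  have ha : a < r := by
    have := (path_bounds (A := T) hC.hr hC.hc (Kv r c T s - 1)).1; rw [hab] at this; exact this
  have hb2 : b < c := by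
    have := (path_bounds (A := T) hC.hr hC.hc (Kv r c T s - 1)).2; rw [hab] at this; exact this
  have hstep : slidePath r c T (Kv r c T s) = slideNext r c T (a, b) := by
    conv_lhs => rw [← hprev]
    rw [path_succ, hab]
  have hmem := hC.Kmem
  have hw' := hC.hw
  have hfa := hC.hfit a ha
  rcases slideNext_cases r c T a b with ⟨h, hbo⟩ | ⟨h, hbo⟩ | ⟨h, hbo1, hbo2⟩
  · -- right move
    rw [h] at hstep
    have hi0 : i0v r c T s = a := by unfold i0v; rw [hstep]
    have hcol2 : s a ≤ b + 1 := by
      rw [hstep] at hmem; exact hmem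
    have hcol3 : b + 1 = s a := by omega
    have h1main : slidePath r c T (Kv r c T s) = (i0v r c T s, s (i0v r c T s)) := by
      rw [hstep, hi0, ← hcol3]
    refine ⟨h1main, ?_, ?_, ?_⟩
    · rw [hab, hi0, show s a - 1 = b by omega]
    · rw [hi0]; omega
    · have hsum := path_sum (A := T) hC.hr hC.hc (Kv r c T s)
      rw [hstep] at hsum
      have hKle := hC.Kle
      simp only at hsum
      rw [hi0]
      omega
  · -- down move : impossible
    exfalso
    rw [h] at hstep
    have hcolgeq : s (a + 1) ≤ b := by rw [hstep] at hmem; exact hmem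
    have hforce := hC.EF hbo hcolgeq (by omega)
    have hbound2 : b + 1 < c := by omega
    have hright : slideNext r c T (a, b) = (a, b+1) :=
      slideNext_right hbound2 (fun _ => hforce)
    rw [hright] at h
    exact absurd (congrArg Prod.fst h) (by simp)
  · -- stuck : impossible
    exfalso
    rw [h] at hstep
    rw [hstep] at hmem
    have : s a ≤ b := hmem
    omega

end Path
section Path2

variable {r c w k : ℕ} {T : ℕ → ℕ → ℕ} {s : ℕ → ℕ}

lemma Ctx.i0r (hC : Ctx r c w k T s) : i0v r c T s < r := by
  have := (path_bounds (A := T) hC.hr hC.hc (Kv r c T s)).1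
  rw [hC.entry.1] at this
  exact this

lemma Ctx.d1 (hC : Ctx r c w k T s) (h : i0v r c T s + 1 < r) :
    s (i0v r c T s + 1) < s (i0v r c T s) := by
  obtain ⟨he1, he2, he3, he4⟩ := hC.entry
  have hKpos := hC.Kpos
  have hprev : Kv r c T s - 1 + 1 = Kv r c T s := by omega
  have hstep : slidePath r c T (Kv r c T s) =
      slideNext r c T (i0v r c T s, s (i0v r c T s) - 1) := by
    conv_lhs => rw [← hprev]
    rw [path_succ, he2]
  have hfa := hC.hfit (i0v r c T s) hC.i0r
  have hw' := hC.hw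
  have hbound2 : (s (i0v r c T s) - 1) + 1 < c := by omega
  have hcond := slideNext_right_cond (A := T) h hbound2 (by
    rw [← hstep, he1, show s (i0v r c T s) - 1 + 1 = s (i0v r c T s) by omega])
  rw [show s (i0v r c T s) - 1 + 1 = s (i0v r c T s) by omega] at hcond
  by_contra hcon
  push_neg at hcon
  have hlt : s (i0v r c T s) - 1 < s (i0v r c T s + 1) := by omega
  have hle : T (i0v r c T s + 1) (s (i0v r c T s) - 1) ≤ k :=
    hC.T1le (by omega) hlt
  obtain ⟨hv1, _⟩ := hC.SvalT hC.i0r hC.hw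
  have he0 : s (i0v r c T s) + 0 = s (i0v r c T s) := by omega
  rw [he0] at hv1
  omega

lemma Ctx.cross (hC : Ctx r c w k T s) {t : ℕ} (ht : t < w) :
    slidePath r c T (Kv r c T s + t) = (i0v r c T s, s (i0v r c T s) + t) := by
  induction t with
  | zero => simpa using hC.entry.1
  | succ n ih =>
    have ihn := ih (by omega)
    have hfa := hC.hfit (i0v r c T s) hC.i0r
    have hstep : slidePath r c T (Kv r c T s + (n+1)) =
        slideNext r c T (i0v r c T s, s (i0v r c T s) + n) := by
      rw [show Kv r c T s + (n+1) = (Kv r c T s + n) + 1 by omega, path_succ, ihn]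
    rw [hstep]
    apply slideNext_right (by omega)
    intro h1
    -- right forcing inside the band
    have hd := hC.d1 h1
    have hfa1 := hC.hfit (i0v r c T s + 1) h1
    rcases Nat.lt_or_ge (s (i0v r c T s) + n) (s (i0v r c T s + 1) + w) with hin | hin
    · have ha : (s (i0v r c T s) + n) - s (i0v r c T s + 1) < w := by omega
      have hch1 : T (i0v r c T s) (s (i0v r c T s) + n + 1) ≤
          T (i0v r c T s) (s (i0v r c T s) + ((s (i0v r c T s) + n) - s (i0v r c T s + 1))) :=
        hC.row_le hC.i0r (by omega) (by omega)
      have hch2 := hC.hcol (i0v r c T s) ((s (i0v r c T s) + n) - s (i0v r c T s + 1)) h1 ha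
      have he : s (i0v r c T s + 1) + ((s (i0v r c T s) + n) - s (i0v r c T s + 1)) =
          s (i0v r c T s) + n := by omega
      rw [he] at hch2
      omega
    · have hgt := hC.T2gt h1 hin (by omega)
      obtain ⟨_, hv2⟩ := hC.SvalT hC.i0r (show n + 1 < w from ht)
      have hv2' : T (i0v r c T s) (s (i0v r c T s) + n + 1) ≤ k + r * w := hv2
      omega

/-- After crossing the band, the path stays strictly to its right — except in the
degenerate case where the band ends at the bottom-right corner. -/
lemma Ctx.post (hC : Ctx r c w k T s) {n : ℕ} (hn : Kv r c T s + w ≤ n) :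
    s ((slidePath r c T n).1) + w ≤ (slidePath r c T n).2 ∨
    ((i0v r c T s = r - 1 ∧ s (i0v r c T s) + w = c) ∧ slidePath r c T n = (r - 1, c - 1)) := by
  induction n with
  | zero => exact absurd hn (by have := hC.hw; omega)
  | succ m ih =>
    have hw' := hC.hw
    have hfa := hC.hfit (i0v r c T s) hC.i0r
    rcases Nat.lt_or_ge m (Kv r c T s + w) with hlt | hge
    · -- base case : m = Kv + w - 1
      have hm : m = Kv r c T s + (w - 1) := by omega
      have hcr := hC.cross (show w - 1 < w by omega)
      have hstep : slidePath r c T (m + 1) =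
          slideNext r c T (i0v r c T s, s (i0v r c T s) + (w - 1)) := by
        rw [hm, path_succ, hcr]
      rcases slideNext_cases r c T (i0v r c T s) (s (i0v r c T s) + (w - 1)) with
        ⟨h, hbo⟩ | ⟨h, hbo⟩ | ⟨h, hbo1, hbo2⟩
      · left
        rw [h] at hstep
        rw [hstep]
        simp only
        omega
      · left
        rw [h] at hstep
        rw [hstep]
        simp only
        have := hC.d1 hbo
        have := hC.hfit (i0v r c T s + 1) hbo
        omega
      · right
        rw [h] at hstep
        have hi0 := hC.i0r
        refine ⟨⟨by omega, by omega⟩, ?_⟩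
        rw [hstep, Prod.mk.injEq]
        exact ⟨by omega, by omega⟩
    · -- inductive step
      rcases ih hge with hreg | ⟨hbad, hcorner⟩
      · obtain ⟨a, b, hab⟩ : ∃ a b, slidePath r c T m = (a, b) := ⟨_, _, rfl⟩
        rw [hab] at hreg
        simp only at hreg
        have ha : a < r := by
          have := (path_bounds (A := T) hC.hr hC.hc m).1; rw [hab] at this; exact this
        have hstep : slidePath r c T (m + 1) = slideNext r c T (a, b) := by
          rw [path_succ, hab]
        rcases slideNext_cases r c T a b with ⟨h, hbo⟩ | ⟨h, hbo⟩ | ⟨h, hbo1, hbo2⟩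
        · left; rw [h] at hstep; rw [hstep]; simp only; omega
        · left; rw [h] at hstep; rw [hstep]; simp only
          have := hC.hmono a hbo
          omega
        · left; rw [h] at hstep; rw [hstep]; simp only; omega
      · right
        refine ⟨hbad, ?_⟩
        rw [path_succ, hcorner]
        have : ¬ (r - 1 + 1 < r) := by have := hC.hr; omega
        have h2 : ¬ (c - 1 + 1 < c) := by have := hC.hc; omega
        rw [slideNext_stuck this h2]

/-- Before finishing the crossing, the path stays in rows ≤ i0. -/
lemma Ctx.rows_le (hC : Ctx r c w k T s) {n : ℕ} (hn : n ≤ Kv r c T s + (w - 1)) :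
    (slidePath r c T n).1 ≤ i0v r c T s := by
  have := path_row_mono (A := T) hC.hr hC.hc hn
  rw [hC.cross (show w - 1 < w by have := hC.hw; omega)] at this
  exact this

end Path2
/-- The new offsets: the crossing row shifts one step left. -/
noncomputable def s'v (r c : ℕ) (T : ℕ → ℕ → ℕ) (s : ℕ → ℕ) : ℕ → ℕ :=
  fun i => if i = i0v r c T s then s i - 1 else s i

section Goal3

variable {r c w k : ℕ} {T : ℕ → ℕ → ℕ} {s : ℕ → ℕ}

lemma Ctx.s'fit (hC : Ctx r c w k T s) {i : ℕ} (hi : i < r) : s'v r c T s i + w ≤ c := by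
  have := hC.hfit i hi
  unfold s'v
  split_ifs <;> omega

lemma Ctx.s'mono (hC : Ctx r c w k T s) {i : ℕ} (hi : i + 1 < r) :
    s'v r c T s (i+1) ≤ s'v r c T s i := by
  have hm := hC.hmono i hi
  unfold s'v
  split_ifs with h1 h2 h2
  · omega
  · -- i+1 = i0, i ≠ i0
    omega
  · -- i = i0, i+1 ≠ i0 : need s(i0+1) < s i0
    have := hC.d1 (h2 ▸ hi)
    rw [← h2] at this
    omega
  · omega

lemma Ctx.offpath (hC : Ctx r c w k T s) {i j : ℕ} (hi : i < r) (hj : j < w)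
    (hne : i ≠ i0v r c T s) : ∀ n, slidePath r c T n ≠ (i, s i + j) := by
  intro n hn
  have hw' := hC.hw
  have hK := hC.Kpos
  rcases Nat.lt_or_ge n (Kv r c T s) with h1 | h1
  · have := hC.preK h1
    rw [hn] at this
    simp only at this
    omega
  · rcases Nat.lt_or_ge n (Kv r c T s + w) with h2 | h2
    · have hcr := hC.cross (show n - Kv r c T s < w by omega)
      rw [show Kv r c T s + (n - Kv r c T s) = n by omega, hn] at hcr
      exact hne (congrArg Prod.fst hcr)
    · rcases hC.post h2 with hreg | ⟨hbad, hcor⟩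
      · rw [hn] at hreg
        simp only at hreg
        omega
      · rw [hn] at hcor
        rw [Prod.mk.injEq] at hcor
        exact hne (by omega)

lemma Ctx.goal3 (hC : Ctx r c w k T s) {i j : ℕ} (hi : i < r) (hj : j < w) :
    promote r c T i (s'v r c T s i + j) = T i (s i + j) - 1 := by
  have hw' := hC.hw
  have hKpos := hC.Kpos
  have hfi := hC.hfit i hi
  by_cases hcase : i = i0v r c T s
  · obtain ⟨he1, he2, he3, he4⟩ := hC.entry
    rw [← hcase] at he1 he2 he3 he4
    have hs' : s'v r c T s i = s i - 1 := by unfold s'v; rw [if_pos hcase]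
    have hcell : slidePath r c T (Kv r c T s - 1 + j) = (i, s i - 1 + j) := by
      rcases j with _ | j'
      · simpa using he2
      · have hidx : Kv r c T s - 1 + (j' + 1) = Kv r c T s + j' := by omega
        have hcr := hC.cross (show j' < w by omega)
        rw [← hcase] at hcr
        rw [hidx, hcr, Prod.mk.injEq]
        exact ⟨rfl, by omega⟩
    have hnc : (i, s i - 1 + j) ≠ (r - 1, c - 1) := by
      rw [Ne, Prod.mk.injEq]
      rintro ⟨e1, e2⟩
      omega
    have hpr := promote_eq_on hC.hr hC.hc hcell hnc
    have hcr2 := hC.cross (show j < w from hj)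
    rw [← hcase] at hcr2
    rw [hs', hpr, show Kv r c T s - 1 + j + 1 = Kv r c T s + j by omega, hcr2]
  · have hs' : s'v r c T s i = s i := by unfold s'v; rw [if_neg hcase]
    rw [hs', promote_eq_off (hC.offpath hi hj hcase)]

end Goal3
section Corr

variable {r c w k : ℕ} {T : ℕ → ℕ → ℕ} {s : ℕ → ℕ}

lemma Ctx.Ustep_right (hC : Ctx r c w k T s) {i j : ℕ} (hi : i < r) (hb : j + 1 < c - w)
    (h : i + 1 < r → delCols T s w i (j+1) ≤ delCols T s w (i+1) j) :
    slideNext r (c-w) (stdFill r (c-w) (delCols T s w)) (i, j) = (i, j+1) := by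
  apply slideNext_right hb
  intro h1
  rw [stdFill_le_iff hi hb h1 (by omega)]
  exact h h1

lemma Ctx.Ustep_down (hC : Ctx r c w k T s) {i j : ℕ} (h1 : i + 1 < r) (hj : j < c - w)
    (h : j + 1 < c - w → ¬ (delCols T s w i (j+1) ≤ delCols T s w (i+1) j)) :
    slideNext r (c-w) (stdFill r (c-w) (delCols T s w)) (i, j) = (i+1, j) := by
  apply slideNext_down h1
  intro hb
  rw [stdFill_le_iff (by omega) hb h1 hj]
  exact h hb

/-- The master correspondence between the sliding path of `T` and the sliding path
of the standardization of `T₁T₂`. -/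
lemma Ctx.corr (hC : Ctx r c w k T s) (m : ℕ) :
    slidePath r (c-w) (stdFill r (c-w) (delCols T s w)) m =
      if m < Kv r c T s then slidePath r c T m
      else ((slidePath r c T (m + w)).1, (slidePath r c T (m + w)).2 - w) := by
  have hw' := hC.hw
  have hcw : 0 < c - w := by have := hC.hwc; omega
  have hwc := hC.hwc
  obtain ⟨he1, he2, he3, he4⟩ := hC.entry
  have hKpos := hC.Kpos
  induction m with
  | zero => rw [if_pos hKpos]; rfl
  | succ m IH =>
    by_cases hm1 : m + 1 < Kv r c T s
    · -- Case A : still strictly left of the band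
      have hmK : m < Kv r c T s := by omega
      rw [if_pos hmK] at IH
      rw [if_pos hm1]
      obtain ⟨a, b, hab⟩ : ∃ a b, slidePath r c T m = (a, b) := ⟨_, _, rfl⟩
      have hb_s : b < s a := by
        have := hC.preK hmK; rw [hab] at this; exact this
      have ha : a < r := by
        have := (path_bounds (A := T) hC.hr hC.hc m).1; rw [hab] at this; exact this
      have hfa := hC.hfit a ha
      have hstepT : slidePath r c T (m+1) = slideNext r c T (a, b) := by
        rw [path_succ, hab]
      have hstepU : slidePath r (c-w) (stdFill r (c-w) (delCols T s w)) (m+1) =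
          slideNext r (c-w) (stdFill r (c-w) (delCols T s w)) (a, b) := by
        rw [path_succ, IH, hab]
      rcases slideNext_cases r c T a b with ⟨h, hbo⟩ | ⟨h, hbo⟩ | ⟨h, hbo1, hbo2⟩
      · -- T moves right
        rw [h] at hstepT
        have hb1s : b + 1 < s a := by
          have := hC.preK hm1; rw [hstepT] at this; exact this
        rw [hstepU, hstepT]
        apply hC.Ustep_right ha (by omega)
        intro h1
        have hcond : T a (b+1) ≤ T (a+1) b := slideNext_right_cond h1 hbo h
        have hU1 : delCols T s w a (b+1) = T a (b+1) := if_pos hb1s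
        rw [hU1]
        rcases Nat.lt_or_ge b (s (a+1)) with hlo | hlo
        · rw [show delCols T s w (a+1) b = T (a+1) b from if_pos hlo]
          exact hcond
        · rw [show delCols T s w (a+1) b = T (a+1) (b+w) from if_neg (by omega)]
          have hk1 : T a (b+1) ≤ k := hC.T1le ha hb1s
          have hk2 : k + r * w < T (a+1) (b+w) := by
            apply hC.T2gt h1 (by omega)
            have := hC.hfit (a+1) h1
            omega
          omega
      · -- T moves down
        rw [h] at hstepT
        have hbs1 : b < s (a+1) := by
          have := hC.preK hm1; rw [hstepT] at this; exact this
        rw [hstepU, hstepT]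
        apply hC.Ustep_down hbo (by have := hC.hfit (a+1) hbo; omega)
        intro hb'
        have hU2 : delCols T s w (a+1) b = T (a+1) b := if_pos hbs1
        rw [hU2]
        rcases Nat.lt_or_ge (b+1) (s a) with hlo | hlo
        · rw [show delCols T s w a (b+1) = T a (b+1) from if_pos hlo]
          exact slideNext_down_cond hbo (by omega) h
        · have hsa : b + 1 = s a := by omega
          rw [show delCols T s w a (b+1) = T a (b+1+w) from if_neg (by omega)]
          have hk1 : T (a+1) b ≤ k := hC.T1le (by omega) hbs1
          have hk2 : k + r * w < T a (b+1+w) := hC.T2gt ha (by omega) (by omega)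
          omega
      · -- stuck : impossible here
        exfalso
        omega
    · by_cases hm2 : m + 1 = Kv r c T s
      · -- Case B : crossing the band
        have hmK : m < Kv r c T s := by omega
        rw [if_pos hmK] at IH
        rw [if_neg (by omega)]
        have hmKm : m = Kv r c T s - 1 := by omega
        have hprev : slidePath r c T m = (i0v r c T s, s (i0v r c T s) - 1) := by
          rw [hmKm]; exact he2
        have hstepU : slidePath r (c-w) (stdFill r (c-w) (delCols T s w)) (m+1) =
            slideNext r (c-w) (stdFill r (c-w) (delCols T s w))
              (i0v r c T s, s (i0v r c T s) - 1) := by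
          rw [path_succ, IH, hprev]
        have hKw : slidePath r c T (Kv r c T s + w) =
            slideNext r c T (i0v r c T s, s (i0v r c T s) + (w-1)) := by
          rw [show Kv r c T s + w = (Kv r c T s + (w-1)) + 1 by omega, path_succ,
            hC.cross (show w - 1 < w by omega)]
        have hidx : m + 1 + w = Kv r c T s + w := by omega
        rw [hidx]
        have hfi0 := hC.hfit (i0v r c T s) hC.i0r
        rcases slideNext_cases r c T (i0v r c T s) (s (i0v r c T s) + (w-1)) with
          ⟨h, hbo⟩ | ⟨h, hbo⟩ | ⟨h, hbo1, hbo2⟩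
        · -- T exits to the right
          rw [h] at hKw
          rw [hKw]
          simp only
          rw [hstepU]
          have hgoal2 : s (i0v r c T s) + (w-1) + 1 - w = s (i0v r c T s) - 1 + 1 := by omega
          rw [hgoal2]
          apply hC.Ustep_right hC.i0r (by omega)
          intro h1
          have hd := hC.d1 h1
          have hcond := slideNext_right_cond h1 hbo h
          rw [show s (i0v r c T s) - 1 + 1 = s (i0v r c T s) by omega]
          rw [show delCols T s w (i0v r c T s) (s (i0v r c T s)) =
            T (i0v r c T s) (s (i0v r c T s) + w) from if_neg (by omega)]
          rw [show delCols T s w (i0v r c T s + 1) (s (i0v r c T s) - 1) =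
            T (i0v r c T s + 1) (s (i0v r c T s) - 1 + w) from if_neg (by omega)]
          rw [show s (i0v r c T s) + (w-1) + 1 = s (i0v r c T s) + w by omega,
            show s (i0v r c T s) + (w-1) = s (i0v r c T s) - 1 + w by omega] at hcond
          exact hcond
        · -- T exits downwards
          rw [h] at hKw
          rw [hKw]
          simp only
          rw [hstepU]
          have hd := hC.d1 hbo
          have hgoal2 : s (i0v r c T s) + (w-1) - w = s (i0v r c T s) - 1 := by omega
          rw [hgoal2]
          apply hC.Ustep_down hbo (by omega)
          intro hb'
          have hcond := slideNext_down_cond hbo (by omega) h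
          rw [show s (i0v r c T s) - 1 + 1 = s (i0v r c T s) by omega]
          rw [show delCols T s w (i0v r c T s) (s (i0v r c T s)) =
            T (i0v r c T s) (s (i0v r c T s) + w) from if_neg (by omega)]
          rw [show delCols T s w (i0v r c T s + 1) (s (i0v r c T s) - 1) =
            T (i0v r c T s + 1) (s (i0v r c T s) - 1 + w) from if_neg (by omega)]
          rw [show s (i0v r c T s) + (w-1) + 1 = s (i0v r c T s) + w by omega,
            show s (i0v r c T s) + (w-1) = s (i0v r c T s) - 1 + w by omega] at hcond
          exact hcond
        · -- T gets stuck at the corner while exiting : degenerate band at the corner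
          rw [h] at hKw
          rw [hKw]
          simp only
          rw [hstepU]
          have hgoal2 : s (i0v r c T s) + (w-1) - w = s (i0v r c T s) - 1 := by omega
          rw [hgoal2]
          apply slideNext_stuck hbo1
          omega
      · -- Case C : past the band
        have hmge : Kv r c T s ≤ m := by omega
        rw [if_neg (by omega)] at IH
        rw [if_neg (by omega)]
        obtain ⟨a, b, hab⟩ : ∃ a b, slidePath r c T (m + w) = (a, b) := ⟨_, _, rfl⟩
        have ha : a < r := by
          have := (path_bounds (A := T) hC.hr hC.hc (m+w)).1; rw [hab] at this; exact this
        have hbc : b < c := by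
          have := (path_bounds (A := T) hC.hr hC.hc (m+w)).2; rw [hab] at this; exact this
        have hstepT : slidePath r c T (m+w+1) = slideNext r c T (a, b) := by
          rw [path_succ, hab]
        have hidx : m + 1 + w = m + w + 1 := by omega
        rw [hidx]
        have hstepU : slidePath r (c-w) (stdFill r (c-w) (delCols T s w)) (m+1) =
            slideNext r (c-w) (stdFill r (c-w) (delCols T s w)) (a, b - w) := by
          rw [path_succ, IH, hab]
        rcases hC.post (show Kv r c T s + w ≤ m + w by omega) with hreg | ⟨hbad, hcor⟩
        · rw [hab] at hreg
          simp only at hreg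
          have hsa1 : a + 1 < r → s (a+1) ≤ b - w := by
            intro h1; have := hC.hmono a h1; omega
          rcases slideNext_cases r c T a b with ⟨h, hbo⟩ | ⟨h, hbo⟩ | ⟨h, hbo1, hbo2⟩
          · -- right
            rw [h] at hstepT
            rw [hstepT]
            simp only
            rw [hstepU, show b + 1 - w = (b - w) + 1 by omega]
            apply hC.Ustep_right ha (by omega)
            intro h1
            have hcond := slideNext_right_cond h1 hbo h
            rw [show delCols T s w a (b - w + 1) = T a (b - w + 1 + w) from if_neg (by omega)]
            rw [show delCols T s w (a+1) (b - w) = T (a+1) (b - w + w) from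
              if_neg (by have := hsa1 h1; omega)]
            rw [show b - w + 1 + w = b + 1 by omega, show b - w + w = b by omega]
            exact hcond
          · -- down
            rw [h] at hstepT
            rw [hstepT]
            simp only
            rw [hstepU]
            apply hC.Ustep_down hbo (by omega)
            intro hb'
            have hcond := slideNext_down_cond hbo (by omega) h
            rw [show delCols T s w a (b - w + 1) = T a (b - w + 1 + w) from if_neg (by omega)]
            rw [show delCols T s w (a+1) (b - w) = T (a+1) (b - w + w) from
              if_neg (by have := hsa1 hbo; omega)]
            rw [show b - w + 1 + w = b + 1 by omega, show b - w + w = b by omega]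
            exact hcond
          · -- stuck
            rw [h] at hstepT
            rw [hstepT]
            simp only
            rw [hstepU]
            apply slideNext_stuck hbo1
            omega
        · -- degenerate corner case
          rw [hab] at hcor
          rw [Prod.mk.injEq] at hcor
          obtain ⟨hc1, hc2⟩ := hcor
          subst hc1; subst hc2
          have hstuck : slideNext r c T (r-1, c-1) = (r-1, c-1) :=
            slideNext_stuck (by have := hC.hr; omega) (by have := hC.hc; omega)
          rw [hstuck] at hstepT
          rw [hstepT]
          simp only
          rw [hstepU]
          apply slideNext_stuck (by have := hC.hr; omega)
          omega
  done

end Corr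
section Master

variable {r c w k : ℕ} {T : ℕ → ℕ → ℕ} {s : ℕ → ℕ}

lemma Ctx.noBad_of_ne (hC : Ctx r c w k T s)
    (h : ¬ (i0v r c T s = r - 1 ∧ s (i0v r c T s) + w = c)) : True := trivial

/-- In the degenerate corner case all the band offsets are equal to `c - w`. -/
lemma Ctx.bad_region (hC : Ctx r c w k T s) {A B : ℕ}
    (hbad : i0v r c T s = r - 1 ∧ s (i0v r c T s) + w = c)
    (hA : A < r) (hB : B < c) (hreg : s A + w ≤ B) : False := by
  have hsm : s (i0v r c T s) ≤ s A := by
    rw [hbad.1]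
    exact hC.s_mono (by omega) (by have := hC.hr; omega)
  omega

lemma Ctx.master (hC : Ctx r c w k T s) {i j : ℕ} (hi : i < r) (hj : j < c - w)
    (hne : (i, j) ≠ (r - 1, c - w - 1)) :
    ∃ a b, a < r ∧ b < c - w ∧
      delCols (promote r c T) (s'v r c T s) w i j = delCols T s w a b - 1 ∧
      promote r (c-w) (stdFill r (c-w) (delCols T s w)) i j =
        stdFill r (c-w) (delCols T s w) a b - 1 := by
  have hw' := hC.hw
  have hwc := hC.hwc
  have hcw : 0 < c - w := by omega
  obtain ⟨he1, he2, he3, he4⟩ := hC.entry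
  have hKpos := hC.Kpos
  have hi0r := hC.i0r
  have hfi0 := hC.hfit (i0v r c T s) hi0r
  have hfii := hC.hfit i hi
  by_cases hon : slidePath r (c-w) (stdFill r (c-w) (delCols T s w)) (i+j) = (i, j)
  · -- (i,j) lies on the sliding path of the standardized tableau
    have hpru := promote_eq_on (A := stdFill r (c-w) (delCols T s w)) hC.hr hcw hon hne
    obtain ⟨a', b', hnu⟩ : ∃ a b,
        slidePath r (c-w) (stdFill r (c-w) (delCols T s w)) (i+j+1) = (a, b) := ⟨_, _, rfl⟩
    have ha' : a' < r := by
      have := (path_bounds (A := stdFill r (c-w) (delCols T s w)) hC.hr hcw (i+j+1)).1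
      rw [hnu] at this; exact this
    have hb' : b' < c - w := by
      have := (path_bounds (A := stdFill r (c-w) (delCols T s w)) hC.hr hcw (i+j+1)).2
      rw [hnu] at this; exact this
    refine ⟨a', b', ha', hb', ?_, by rw [hpru, hnu]⟩
    -- now compute the delCols ∘ promote side
    have hcm := hC.corr (i+j)
    have hcm1 := hC.corr (i+j+1)
    rcases Nat.lt_or_ge (i+j+1) (Kv r c T s) with hK1 | hK1
    · -- (i) strictly before the entry
      rw [if_pos (by omega)] at hcm
      rw [if_pos hK1] at hcm1
      rw [hon] at hcm
      rw [hnu] at hcm1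
      have hTon : slidePath r c T (i+j) = (i, j) := hcm.symm
      have hTnext : slidePath r c T (i+j+1) = (a', b') := hcm1.symm
      have hjs : j < s i := by
        have := hC.preK (m := i+j) (by omega); rw [hTon] at this; exact this
      have hbs' : b' < s a' := by
        have := hC.preK (m := i+j+1) hK1; rw [hTnext] at this; exact this
      have hjs' : j < s'v r c T s i := by
        unfold s'v
        split_ifs with hii
        · -- i = i0 : since i+j+1 < K = i0 + s0, j < s0 - 1
          subst hii; omega
        · omega
      have hD : delCols (promote r c T) (s'v r c T s) w i j = promote r c T i j :=
        if_pos hjs'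
      have hprT := promote_eq_on (A := T) hC.hr hC.hc hTon
        (by rw [Ne, Prod.mk.injEq]; rintro ⟨e1, e2⟩; omega)
      rw [hD, hprT, hTnext]
      rw [show delCols T s w a' b' = T a' b' from if_pos hbs']
    · rcases Nat.lt_or_ge (i+j) (Kv r c T s) with hK2 | hK2
      · -- (ii) the entry step itself : i+j = K - 1
        have hmKm : i + j = Kv r c T s - 1 := by omega
        rw [if_pos hK2] at hcm
        rw [hon, hmKm, he2] at hcm
        rw [Prod.mk.injEq] at hcm
        obtain ⟨hii, hjj⟩ := hcm
        have hnotbad : ¬ (i0v r c T s = r - 1 ∧ s (i0v r c T s) + w = c) := by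
          rintro ⟨b1, b2⟩
          apply hne
          rw [Prod.mk.injEq]
          omega
        rw [if_neg (by omega)] at hcm1
        obtain ⟨A, B, hAB⟩ : ∃ A B, slidePath r c T (i+j+1+w) = (A, B) := ⟨_, _, rfl⟩
        have hidx : i+j+1+w = Kv r c T s + w := by omega
        rcases hC.post (show Kv r c T s + w ≤ i+j+1+w by omega) with hreg | ⟨hbad, _⟩
        · rw [hAB] at hreg hcm1
          simp only at hreg hcm1
          have hA : A < r := by
            have := (path_bounds (A := T) hC.hr hC.hc (i+j+1+w)).1; rw [hAB] at this
            exact this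
          have hB : B < c := by
            have := (path_bounds (A := T) hC.hr hC.hc (i+j+1+w)).2; rw [hAB] at this
            exact this
          rw [hnu] at hcm1
          rw [Prod.mk.injEq] at hcm1
          obtain ⟨ea, eb⟩ := hcm1
          have hjge : ¬ (j < s'v r c T s i) := by
            unfold s'v
            rw [hii, if_pos rfl]
            omega
          have hD : delCols (promote r c T) (s'v r c T s) w i j =
              promote r c T i (j + w) := if_neg hjge
          have hcell : slidePath r c T (i+j+w) = (i, j + w) := by
            have hcr := hC.cross (show w - 1 < w by omega)
            rw [show i+j+w = Kv r c T s + (w-1) by omega, hcr, Prod.mk.injEq]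
            exact ⟨hii.symm, by omega⟩
          have hnc : (i, j + w) ≠ (r-1, c-1) := by
            rw [Ne, Prod.mk.injEq]
            rintro ⟨e1, e2⟩
            exact hnotbad ⟨by omega, by omega⟩
          have hprT := promote_eq_on (A := T) hC.hr hC.hc hcell hnc
          rw [hD, hprT, show i+j+w+1 = i+j+1+w by omega, hAB, ea, eb]
          rw [show delCols T s w A (B - w) = T A (B - w + w) from if_neg (by omega)]
          rw [show B - w + w = B by omega]
        · exact absurd hbad hnotbad
      · -- (iii) past the band
        rw [if_neg (by omega)] at hcm
        rw [if_neg (by omega)] at hcm1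
        obtain ⟨A, B, hAB⟩ : ∃ A B, slidePath r c T (i+j+w) = (A, B) := ⟨_, _, rfl⟩
        have hA : A < r := by
          have := (path_bounds (A := T) hC.hr hC.hc (i+j+w)).1; rw [hAB] at this; exact this
        have hB : B < c := by
          have := (path_bounds (A := T) hC.hr hC.hc (i+j+w)).2; rw [hAB] at this; exact this
        rw [hon, hAB] at hcm
        simp only [Prod.mk.injEq] at hcm
        obtain ⟨hiA, hjB⟩ := hcm
        rcases hC.post (show Kv r c T s + w ≤ i+j+w by omega) with hreg | ⟨hbad, hcor⟩
        · rw [hAB] at hreg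
          simp only at hreg
          -- (A,B) is not the corner (else (i,j) would be the excluded corner)
          have hABnc : (A, B) ≠ (r-1, c-1) := by
            rw [Ne, Prod.mk.injEq]
            rintro ⟨e1, e2⟩
            apply hne
            rw [Prod.mk.injEq]
            omega
          obtain ⟨A2, B2, hAB2⟩ : ∃ A B, slidePath r c T (i+j+w+1) = (A, B) := ⟨_, _, rfl⟩
          have hA2 : A2 < r := by
            have := (path_bounds (A := T) hC.hr hC.hc (i+j+w+1)).1; rw [hAB2] at this
            exact this
          have hB2 : B2 < c := by
            have := (path_bounds (A := T) hC.hr hC.hc (i+j+w+1)).2; rw [hAB2] at this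
            exact this
          have hreg2 : s A2 + w ≤ B2 := by
            rcases hC.post (show Kv r c T s + w ≤ i+j+w+1 by omega) with h2 | ⟨hbad2, _⟩
            · rw [hAB2] at h2; exact h2
            · exact absurd hreg (by intro hr2; exact hC.bad_region hbad2 hA hB hr2)
          rw [show i+j+1+w = i+j+w+1 by omega, hAB2] at hcm1
          rw [hnu] at hcm1
          simp only [Prod.mk.injEq] at hcm1
          obtain ⟨hA2e, hB2e⟩ := hcm1
          have hjge : ¬ (j < s'v r c T s i) := by
            unfold s'v
            rw [hiA]
            split_ifs with hii
            · omega
            · omega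
          have hD : delCols (promote r c T) (s'v r c T s) w i j =
              promote r c T i (j + w) := if_neg hjge
          have hcell : slidePath r c T (i+j+w) = (i, j+w) := by
            rw [hAB, Prod.mk.injEq]
            exact ⟨hiA.symm, by omega⟩
          have hprT := promote_eq_on (A := T) hC.hr hC.hc hcell (by
            rw [Ne, Prod.mk.injEq]
            rintro ⟨e1, e2⟩
            exact hABnc (by rw [Prod.mk.injEq]; omega))
          rw [hD, hprT, hAB2, hA2e, hB2e]
          rw [show delCols T s w A2 (B2 - w) = T A2 (B2 - w + w) from if_neg (by omega)]
          rw [show B2 - w + w = B2 by omega]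
        · -- degenerate corner : excluded by hne
          exfalso
          rw [hAB] at hcor
          rw [Prod.mk.injEq] at hcor
          apply hne
          rw [Prod.mk.injEq]
          omega
  · -- (i,j) is off the sliding path of the standardized tableau
    have hoff : ∀ n, slidePath r (c-w) (stdFill r (c-w) (delCols T s w)) n ≠ (i, j) := by
      intro n hn
      exact hon (path_mem hC.hr hcw hn)
    have hpru := promote_eq_off hoff
    refine ⟨i, j, hi, hj, ?_, hpru⟩
    by_cases hjs : j < s'v r c T s i
    · -- left of the band
      have hD : delCols (promote r c T) (s'v r c T s) w i j = promote r c T i j :=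
        if_pos hjs
      have hjsi : j < s i := by
        unfold s'v at hjs; split_ifs at hjs <;> omega
      have hoffT : ∀ n, slidePath r c T n ≠ (i, j) := by
        intro n hn
        have hn' := path_mem hC.hr hC.hc hn
        rcases Nat.lt_or_ge (i+j) (Kv r c T s) with h1 | h1
        · have := hC.corr (i+j)
          rw [if_pos h1, hn'] at this
          exact hoff _ this
        · rcases Nat.lt_or_ge (i+j) (Kv r c T s + w) with h2 | h2
          · have hcr := hC.cross (show (i+j) - Kv r c T s < w by omega)
            rw [show Kv r c T s + ((i+j) - Kv r c T s) = i+j by omega, hn'] at hcr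
            rw [Prod.mk.injEq] at hcr
            obtain ⟨e1, e2⟩ := hcr
            subst e1
            unfold s'v at hjs
            rw [if_pos rfl] at hjs
            omega
          · rcases hC.post h2 with hreg | ⟨hbad, hcor⟩
            · rw [hn'] at hreg; simp only at hreg; omega
            · rw [hn'] at hcor
              rw [Prod.mk.injEq] at hcor
              have hsic : s i ≤ c - w := by omega
              omega
      rw [hD, promote_eq_off hoffT]
      rw [show delCols T s w i j = T i j from if_pos hjsi]
    · -- right of the band
      have hD : delCols (promote r c T) (s'v r c T s) w i j =
          promote r c T i (j + w) := if_neg hjs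
      -- (i,j) cannot be the special cell (i0, s0 - 1), since that is on the path
      have hnotspec : ¬ (i = i0v r c T s ∧ j = s (i0v r c T s) - 1) := by
        rintro ⟨e1, e2⟩
        apply hoff (Kv r c T s - 1)
        have := hC.corr (Kv r c T s - 1)
        rw [if_pos (by omega), he2] at this
        rw [this, Prod.mk.injEq]
        omega
      have hjsi : s i ≤ j := by
        unfold s'v at hjs
        split_ifs at hjs with hii
        · push_neg at hjs
          rcases Nat.lt_or_ge j (s i) with hlt | hge
          · exfalso; exact hnotspec ⟨hii, by rw [← hii]; omega⟩
          · exact hge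
        · omega
      have hoffT : ∀ n, slidePath r c T n ≠ (i, j + w) := by
        intro n hn
        have hn' := path_mem hC.hr hC.hc hn
        rcases Nat.lt_or_ge (i+(j+w)) (Kv r c T s) with h1 | h1
        · have := hC.preK h1
          rw [hn'] at this
          simp only at this
          omega
        · rcases Nat.lt_or_ge (i+(j+w)) (Kv r c T s + w) with h2 | h2
          · have hcr := hC.cross (show (i+(j+w)) - Kv r c T s < w by omega)
            rw [show Kv r c T s + ((i+(j+w)) - Kv r c T s) = i+(j+w) by omega, hn'] at hcr
            rw [Prod.mk.injEq] at hcr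
            obtain ⟨e1, e2⟩ := hcr
            subst e1
            -- j + w = s i0 + t with t < w forces j ≤ s i0 - 1, but j ≥ s i = s i0
            omega
          · rcases hC.post h2 with hreg | ⟨hbad, hcor⟩
            · -- then (i, j) is on the standardized path after all
              have hcr := hC.corr (i + j)
              rw [if_neg (by omega), show i+j+w = i+(j+w) by omega, hn'] at hcr
              simp only at hcr
              apply hoff (i+j)
              rw [hcr, Prod.mk.injEq]
              omega
            · rw [hn'] at hcor
              rw [Prod.mk.injEq] at hcor
              apply hne
              rw [Prod.mk.injEq]
              omega
      rw [hD, promote_eq_off hoffT]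
      rw [show delCols T s w i j = T i (j + w) from if_neg (by omega)]

end Master
section Final

variable {r c w k : ℕ} {T : ℕ → ℕ → ℕ} {s : ℕ → ℕ}

lemma Ctx.U0pos (hC : Ctx r c w k T s) {a b : ℕ} (ha : a < r) (hb : b < c - w) :
    1 ≤ delCols T s w a b := by
  unfold delCols
  split_ifs
  · exact hC.Tpos ha (by omega)
  · exact hC.Tpos ha (by omega)

lemma Ctx.U0max (hC : Ctx r c w k T s) {a b : ℕ} (ha : a < r) (hb : b < c - w) :
    delCols T s w a b ≤ r * c := by
  unfold delCols
  split_ifs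
  · exact hC.Tmax ha (by omega)
  · exact hC.Tmax ha (by omega)

lemma Ctx.s'last (hC : Ctx r c w k T s) : s'v r c T s (r-1) + w ≤ c - 1 := by
  have hw' := hC.hw
  have hwc := hC.hwc
  have hr' := hC.hr
  have he3 := hC.entry.2.2.1
  have he4 := hC.entry.2.2.2
  have hi0r := hC.i0r
  have hfl := hC.hfit (r-1) (by omega)
  have hf0 := hC.hfit (i0v r c T s) hi0r
  unfold s'v
  split_ifs with hii
  · rw [← hii] at he3 hf0
    omega
  · -- i0 < r - 1 : the corner lies strictly right of the band
    have hi0lt : i0v r c T s < r - 1 := by omega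
    rcases hC.post (show Kv r c T s + w ≤ r + c - 2 by omega) with hreg | ⟨hbad, _⟩
    · have hcorner : slidePath r c T (r + c - 2) = (r-1, c-1) :=
        path_corner hC.hr hC.hc (le_refl _)
      rw [hcorner] at hreg
      simp only at hreg
      omega
    · omega

end Final
/-- Promotion preserves uniformly proper rectangular subtableaux.  If `T = T₁ S T₂`
with `S` a uniformly proper rectangular subtableau (occupying columns
`s i, …, s i + w - 1` of row `i`, content `{k+1, …, k+r*w}`) and `T₁` nonempty, then
`P(T) = T₁' S' T₂'` where `S'` (occupying columns `s' i, …, s' i + w - 1`) is the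
uniformly proper rectangular subtableau obtained from `S` by decrementing every entry
by `1`, and `T₁' T₂'` is equivalent to `P(T₁ T₂)`. -/
theorem promotion_preserves_subtableau (r c w k : ℕ) (T : ℕ → ℕ → ℕ) (s : ℕ → ℕ)
    (hr : 0 < r) (hT : IsRectSYT r c T)
    (hw : 0 < w) (hwc : w < c)
    (hfit : ∀ i, i < r → s i + w ≤ c)
    (hmono : ∀ i, i + 1 < r → s (i + 1) ≤ s i)
    (hT1 : 0 < s 0)
    (hcontent : ∀ v, (k < v ∧ v ≤ k + r * w) ↔ ∃ i j, i < r ∧ j < w ∧ T i (s i + j) = v)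
    (hcol : ∀ i j, i + 1 < r → j < w → T i (s i + j) < T (i + 1) (s (i + 1) + j)) :
    ∃ s' : ℕ → ℕ,
      (∀ i, i < r → s' i + w ≤ c) ∧
      (∀ i, i + 1 < r → s' (i + 1) ≤ s' i) ∧
      (∀ i j, i < r → j < w → promote r c T i (s' i + j) = T i (s i + j) - 1) ∧
      EquivFilling r (c - w) (delCols (promote r c T) s' w)
        (promote r (c - w) (stdFill r (c - w) (delCols T s w))) := by
  have hC : Ctx r c w k T s := ⟨hr, hT, hw, hwc, hfit, hmono, hT1, hcontent, hcol⟩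
  have hcw : 0 < c - w := by omega
  refine ⟨s'v r c T s, fun i hi => hC.s'fit hi, fun i hi => hC.s'mono hi,
    fun i j hi hj => hC.goal3 hi hj, ?_⟩
  intro i j i' j' hi hj hi' hj'
  -- the special corner values
  have hDmax : delCols (promote r c T) (s'v r c T s) w (r-1) (c-w-1) = r * c := by
    have hs'l := hC.s'last
    rw [show delCols (promote r c T) (s'v r c T s) w (r-1) (c-w-1) =
      promote r c T (r-1) ((c-w-1)+w) from if_neg (by omega)]
    rw [show c-w-1+w = c-1 by omega]
    exact promote_corner hC.hr hC.hc
  have hWmax : promote r (c-w) (stdFill r (c-w) (delCols T s w)) (r-1) (c-w-1) =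
      r * (c-w) := promote_corner hC.hr hcw
  have hrc1 : 1 ≤ r * c := by
    have := hC.hc
    exact Nat.one_le_iff_ne_zero.mpr (by positivity)
  have hrcw1 : 1 ≤ r * (c-w) := Nat.mul_pos hr hcw
  by_cases h1 : (i, j) = (r-1, c-w-1) <;> by_cases h2 : (i', j') = (r-1, c-w-1)
  · -- both are the corner
    rw [Prod.mk.injEq] at h1 h2
    obtain ⟨e1, e2⟩ := h1; obtain ⟨e3, e4⟩ := h2
    subst e1; subst e2; subst e3; subst e4
    rw [hDmax, hWmax]
    omega
  · -- first is the corner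
    rw [Prod.mk.injEq] at h1
    obtain ⟨e1, e2⟩ := h1
    subst e1; subst e2
    obtain ⟨a, b, ha, hb, hD, hW⟩ := hC.master hi' hj' h2
    rw [hDmax, hWmax, hD, hW]
    have hu1 := hC.U0max ha hb
    have hu2 := stdFill_le_card (r := r) (c := c - w) (A := delCols T s w) a b
    omega
  · -- second is the corner
    rw [Prod.mk.injEq] at h2
    obtain ⟨e1, e2⟩ := h2
    subst e1; subst e2
    obtain ⟨a, b, ha, hb, hD, hW⟩ := hC.master hi hj h1
    rw [hDmax, hWmax, hD, hW]
    have hu1 := hC.U0max ha hb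
    have hu2 := stdFill_le_card (r := r) (c := c - w) (A := delCols T s w) a b
    have hu3 := hC.U0pos ha hb
    have hu4 := stdFill_pos (r := r) (c := c - w) (A := delCols T s w) ha hb
    omega
  · -- generic case
    obtain ⟨a, b, ha, hb, hD, hW⟩ := hC.master hi hj h1
    obtain ⟨a', b', ha', hb', hD', hW'⟩ := hC.master hi' hj' h2
    rw [hD, hW, hD', hW']
    have hiff := stdFill_lt_iff (r := r) (c := c - w) (A := delCols T s w) ha hb ha' hb'
    have hu1 := hC.U0pos ha hb
    have hu2 := hC.U0pos ha' hb'
    have hu3 := stdFill_pos (r := r) (c := c - w) (A := delCols T s w) ha hb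
    have hu4 := stdFill_pos (r := r) (c := c - w) (A := delCols T s w) ha' hb'
    constructor
    · intro h
      have h' : delCols T s w a b < delCols T s w a' b' := by omega
      have := hiff.mpr h'
      omega
    · intro h
      have h' : stdFill r (c-w) (delCols T s w) a b <
          stdFill r (c-w) (delCols T s w) a' b' := by omega
      have := hiff.mp h'
      omega
end
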